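/- arXiv:2301.04462 — 3 statements merged into one kernel-verified Lean document; each statement's English description precedes it below -/
import Mathlib

section
/- The distributional Bellman operator T^π : P(ℝ)^X → P(ℝ)^X is a γ-contraction with respect to w̄_∞: for all η, η' ∈ P(ℝ)^X, w̄_∞(T^π η, T^π η') ≤ γ · w̄_∞(η, η') (as an inequality in [0,∞]). -/
open MeasureTheory ProbabilityTheory Set
open scoped ENNReal

/-- Generalized inverse CDF (least τ-quantile). -/
noncomputable def invCDF (ν : Measure ℝ) (τ : ℝ) : ℝ := sInf {y | τ ≤ cdf ν y}

/-- Upper inverse CDF (greatest τ-quantile). -/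
noncomputable def upInvCDF (ν : Measure ℝ) (τ : ℝ) : ℝ := sInf {y | τ < cdf ν y}

/-- Quantile level τ_i = (2i-1)/(2m), with `i : Fin m` zero-indexed. -/
noncomputable def qlevel (m : ℕ) (i : Fin m) : ℝ := (2 * (i : ℝ) + 1) / (2 * m)

/-- The uniform m-atom distribution with the given particle locations. -/
noncomputable def paramDistOne {m : ℕ} (θ : Fin m → ℝ) : Measure ℝ :=
  (m : ℝ≥0∞)⁻¹ • ∑ i : Fin m, Measure.dirac (θ i)

/-- Return-distribution function associated with quantile parameters θ. -/
noncomputable def paramDist {X : Type*} {m : ℕ} (θ : X → Fin m → ℝ) : X → Measure ℝ :=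
  fun x => paramDistOne (θ x)

/-- The distributional Bellman operator T^π. -/
noncomputable def bellman {X : Type*} [MeasurableSpace X]
    (P : X → Measure (ℝ × X)) (γ : ℝ) (η : X → Measure ℝ) : X → Measure ℝ :=
  fun x => (P x).bind (fun p => (η p.2).map (fun z => p.1 + γ * z))

/-- The quantile projection Π^λ, parameter-level output. -/
noncomputable def projParam {X : Type*} {m : ℕ} (lam : X → Fin m → ℝ)
    (η : X → Measure ℝ) : X → Fin m → ℝ :=
  fun x i => (1 - lam x i) * invCDF (η x) (qlevel m i) + lam x i * upInvCDF (η x) (qlevel m i)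

/-- The quantile projection Π^λ on return-distribution functions. -/
noncomputable def proj {X : Type*} {m : ℕ} (lam : X → Fin m → ℝ)
    (η : X → Measure ℝ) : X → Measure ℝ :=
  paramDist (projParam lam η)

/-- The projected distributional Bellman operator Π^λ T^π acting on parameters. -/
noncomputable def projBellmanParam {X : Type*} [MeasurableSpace X]
    (P : X → Measure (ℝ × X)) (γ : ℝ) {m : ℕ} (lam : X → Fin m → ℝ)
    (θ : X → Fin m → ℝ) : X → Fin m → ℝ :=
  projParam lam (bellman P γ (paramDist θ))

/-- The cube [0,1]^{X×[m]} of interpolation parameters. -/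
def unitCube (X : Type*) (m : ℕ) : Set (X → Fin m → ℝ) :=
  {lam | ∀ x i, lam x i ∈ Set.Icc (0:ℝ) 1}

/-- Wasserstein-∞ distance (valued in [0,∞]). -/
noncomputable def winf (ν ν' : Measure ℝ) : ℝ≥0∞ :=
  ⨆ t : Set.Ioo (0:ℝ) 1, ENNReal.ofReal |invCDF ν t - invCDF ν' t|

/-- Extension of w∞ to return-distribution functions: max over states. -/
noncomputable def wbar {X : Type*} (η η' : X → Measure ℝ) : ℝ≥0∞ :=
  ⨆ x : X, winf (η x) (η' x)

/-- Wasserstein-1 distance between probability distributions on ℝ. -/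
noncomputable def w1 (ν ν' : Measure ℝ) : ℝ :=
  ∫ t in Set.Ioo (0:ℝ) 1, |invCDF ν t - invCDF ν' t|

/-- Uniform m-atom distributions. -/
noncomputable def FQ (m : ℕ) : Set (Measure ℝ) :=
  {ν | ∃ z : Fin m → ℝ, ν = paramDistOne z}


section AuxQuantile

open Filter Topology

/-- The quantile level is attained: `τ ≤ cdf ν (invCDF ν τ)`. -/
lemma cdf_invCDF_self (ν : Measure ℝ) {τ : ℝ} (h0 : 0 < τ) (h1 : τ < 1) :
    τ ≤ cdf ν (invCDF ν τ) := by
  set S : Set ℝ := {y | τ ≤ cdf ν y} with hS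
  have hne : S.Nonempty := by
    obtain ⟨y, hy⟩ := ((tendsto_cdf_atTop ν).eventually (eventually_ge_nhds h1)).exists
    exact ⟨y, hy⟩
  obtain ⟨y₀, hy₀⟩ := Filter.eventually_atBot.mp ((tendsto_cdf_atBot ν).eventually (eventually_lt_nhds h0))
  have hbdd : BddBelow S := by
    refine ⟨y₀, fun s hs => ?_⟩
    by_contra hc
    push_neg at hc
    exact absurd hs (not_le.mpr (hy₀ s hc.le))
  have hkey : ∀ z, sInf S < z → τ ≤ cdf ν z := by
    intro z hz
    obtain ⟨s, hsS, hsz⟩ := (csInf_lt_iff hbdd hne).mp hz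
    exact le_trans hsS (monotone_cdf ν hsz.le)
  have hrc : Filter.Tendsto (cdf ν) (𝓝[>] (sInf S)) (𝓝 (cdf ν (sInf S))) :=
    ((cdf ν).right_continuous (sInf S)).mono_left (nhdsWithin_mono _ Ioi_subset_Ici_self)
  exact ge_of_tendsto hrc (eventually_nhdsWithin_of_forall fun z hz => hkey z hz)

/-- Galois connection between `invCDF` and `cdf`. -/
lemma invCDF_le_iff (ν : Measure ℝ) {τ : ℝ} (h0 : 0 < τ) (h1 : τ < 1) (y : ℝ) :
    invCDF ν τ ≤ y ↔ τ ≤ cdf ν y := by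
  constructor
  · intro h
    exact le_trans (cdf_invCDF_self ν h0 h1) (monotone_cdf ν h)
  · intro h
    have hbdd : BddBelow {y | τ ≤ cdf ν y} := by
      obtain ⟨y₀, hy₀⟩ := Filter.eventually_atBot.mp ((tendsto_cdf_atBot ν).eventually (eventually_lt_nhds h0))
      refine ⟨y₀, fun s hs => ?_⟩
      by_contra hc
      push_neg at hc
      exact absurd hs (not_le.mpr (hy₀ s hc.le))
    exact csInf_le hbdd h

lemma invCDF_le_invCDF_add (ν ν' : Measure ℝ) {c : ℝ}
    (h : ∀ y, cdf ν y ≤ cdf ν' (y + c)) {τ : ℝ} (h0 : 0 < τ) (h1 : τ < 1) :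
    invCDF ν' τ ≤ invCDF ν τ + c := by
  rw [invCDF_le_iff ν' h0 h1]
  exact le_trans (cdf_invCDF_self ν h0 h1) (h _)

lemma cdf_le_cdf_add_of_invCDF (ν ν' : Measure ℝ) {c : ℝ}
    (h : ∀ τ : ℝ, 0 < τ → τ < 1 → invCDF ν τ ≤ invCDF ν' τ + c) (y : ℝ) :
    cdf ν' y ≤ cdf ν (y + c) := by
  by_contra hlt
  push_neg at hlt
  set t : ℝ := (cdf ν (y + c) + cdf ν' y) / 2 with ht
  have h1 : cdf ν (y + c) < t := by rw [ht]; linarith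
  have h2 : t < cdf ν' y := by rw [ht]; linarith
  have ht0 : 0 < t := lt_of_le_of_lt (cdf_nonneg ν (y + c)) h1
  have ht1 : t < 1 := lt_of_lt_of_le h2 (cdf_le_one ν' y)
  have hq : invCDF ν' t ≤ y := (invCDF_le_iff ν' ht0 ht1 y).mpr h2.le
  have hq2 : invCDF ν t ≤ y + c := le_trans (h t ht0 ht1) (by linarith)
  exact absurd ((invCDF_le_iff ν ht0 ht1 (y + c)).mp hq2) (not_le.mpr h1)

lemma measurable_bellman_fam {X : Type*} [MeasurableSpace X] [Countable X]
    [MeasurableSingletonClass X] (η : X → Measure ℝ)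
    (hη : ∀ x, IsProbabilityMeasure (η x)) (γ : ℝ) :
    Measurable fun p : ℝ × X => (η p.2).map (fun z => p.1 + γ * z) := by
  apply Measure.measurable_of_measurable_coe
  intro s hs
  have hmeas : ∀ r : ℝ, Measurable fun z : ℝ => r + γ * z := fun r => by fun_prop
  have heq : (fun p : ℝ × X => ((η p.2).map (fun z => p.1 + γ * z)) s)
      = fun p : ℝ × X => (η p.2) (Prod.mk p.1 ⁻¹' {q : ℝ × ℝ | q.1 + γ * q.2 ∈ s}) := by
    funext p
    rw [Measure.map_apply (hmeas p.1) hs]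
    rfl
  rw [heq]
  have hT : MeasurableSet {q : ℝ × ℝ | q.1 + γ * q.2 ∈ s} :=
    (measurable_fst.add (measurable_const.mul measurable_snd)) hs
  exact measurable_from_prod_countable_left fun x => by
    haveI := hη x
    exact measurable_measure_prodMk_left (ν := η x) hT

lemma bellman_apply {X : Type*} [MeasurableSpace X] [Countable X]
    [MeasurableSingletonClass X] (P : X → Measure (ℝ × X)) (γ : ℝ)
    (η : X → Measure ℝ) (hη : ∀ x, IsProbabilityMeasure (η x)) (x : X)
    {s : Set ℝ} (hs : MeasurableSet s) :
    bellman P γ η x s = ∫⁻ p, ((η p.2).map (fun z => p.1 + γ * z)) s ∂(P x) :=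
  Measure.bind_apply hs (measurable_bellman_fam η hη γ).aemeasurable

lemma bellman_isProbability {X : Type*} [MeasurableSpace X] [Countable X]
    [MeasurableSingletonClass X] (P : X → Measure (ℝ × X))
    (hP : ∀ x, IsProbabilityMeasure (P x)) (γ : ℝ)
    (η : X → Measure ℝ) (hη : ∀ x, IsProbabilityMeasure (η x)) (x : X) :
    IsProbabilityMeasure (bellman P γ η x) := by
  constructor
  rw [bellman_apply P γ η hη x MeasurableSet.univ]
  have h1 : ∀ p : ℝ × X, ((η p.2).map (fun z => p.1 + γ * z)) univ = 1 := by
    intro p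
    haveI := hη p.2
    have hm : Measurable fun z : ℝ => p.1 + γ * z := by fun_prop
    rw [Measure.map_apply hm MeasurableSet.univ, Set.preimage_univ, measure_univ]
  simp only [h1]
  haveI := hP x
  rw [lintegral_one, measure_univ]

lemma bellman_cdf_le {X : Type*} [MeasurableSpace X] [Countable X]
    [MeasurableSingletonClass X] (P : X → Measure (ℝ × X))
    (hP : ∀ x, IsProbabilityMeasure (P x)) {γ : ℝ} (hγ : 0 < γ)
    (η η' : X → Measure ℝ)
    (hη : ∀ x, IsProbabilityMeasure (η x)) (hη' : ∀ x, IsProbabilityMeasure (η' x))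
    {b : ℝ} (hb : 0 ≤ b)
    (h : ∀ x y, cdf (η x) y ≤ cdf (η' x) (y + b)) (x : X) (y : ℝ) :
    cdf (bellman P γ η x) y ≤ cdf (bellman P γ η' x) (y + γ * b) := by
  haveI := bellman_isProbability P hP γ η hη x
  haveI := bellman_isProbability P hP γ η' hη' x
  rw [cdf_eq_real, cdf_eq_real, measureReal_def, measureReal_def]
  apply ENNReal.toReal_mono (measure_ne_top _ _)
  rw [bellman_apply P γ η hη x measurableSet_Iic,
    bellman_apply P γ η' hη' x measurableSet_Iic]
  refine lintegral_mono fun p => ?_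
  haveI := hη p.2
  haveI := hη' p.2
  show ((η p.2).map fun z => p.1 + γ * z) (Iic y)
      ≤ ((η' p.2).map fun z => p.1 + γ * z) (Iic (y + γ * b))
  have hmeas : Measurable fun z : ℝ => p.1 + γ * z := by fun_prop
  rw [Measure.map_apply hmeas measurableSet_Iic, Measure.map_apply hmeas measurableSet_Iic]
  have hdiv : (y + γ * b - p.1) / γ = (y - p.1) / γ + b := by field_simp; ring
  have hp1 : (fun z : ℝ => p.1 + γ * z) ⁻¹' Iic y = Iic ((y - p.1) / γ) := by
    ext z
    simp only [Set.mem_preimage, Set.mem_Iic]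
    rw [le_div_iff₀ hγ]
    constructor <;> intro h' <;> nlinarith
  have hp2 : (fun z : ℝ => p.1 + γ * z) ⁻¹' Iic (y + γ * b) = Iic ((y - p.1) / γ + b) := by
    ext z
    simp only [Set.mem_preimage, Set.mem_Iic]
    rw [← hdiv, le_div_iff₀ hγ]
    constructor <;> intro h' <;> nlinarith
  rw [hp1, hp2]
  rw [← ofReal_cdf (η p.2), ← ofReal_cdf (η' p.2)]
  exact ENNReal.ofReal_le_ofReal (h p.2 _)

end AuxQuantile

/-- The distributional Bellman operator `T^π` is a `γ`-contraction
with respect to `w̄_∞` (as an inequality in `[0,∞]`). -/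
theorem bellman_gamma_contraction
    {X : Type*} [Fintype X] [MeasurableSpace X] [MeasurableSingletonClass X]
    (P : X → Measure (ℝ × X)) (hP : ∀ x, IsProbabilityMeasure (P x))
    (hPmean : ∀ x, Integrable (fun p : ℝ × X => p.1) (P x))
    (γ : ℝ) (hγ0 : 0 ≤ γ) (hγ1 : γ < 1)
    (η η' : X → Measure ℝ)
    (hη : ∀ x, IsProbabilityMeasure (η x)) (hη' : ∀ x, IsProbabilityMeasure (η' x)) :
    wbar (bellman P γ η) (bellman P γ η') ≤ ENNReal.ofReal γ * wbar η η' := by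
  rcases eq_or_lt_of_le hγ0 with hγ | hγ
  · -- γ = 0 : the two Bellman updates coincide
    have hbe : bellman P γ η = bellman P γ η' := by
      funext x
      unfold bellman
      congr 1
      funext p
      haveI := hη p.2
      haveI := hη' p.2
      have h0 : (fun z : ℝ => p.1 + γ * z) = fun _ : ℝ => p.1 := by
        funext z; rw [← hγ]; ring
      rw [h0, Measure.map_const, Measure.map_const, measure_univ, measure_univ]
    rw [hbe]
    have hz : wbar (bellman P γ η') (bellman P γ η') = 0 := by
      simp [wbar, winf]
    rw [hz]
    exact bot_le
  · by_cases hB : wbar η η' = ∞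
    · rw [hB, ENNReal.mul_top (by simp [ENNReal.ofReal_eq_zero, not_le, hγ])]
      exact le_top
    · set b : ℝ := (wbar η η').toReal with hbdef
      have hb0 : 0 ≤ b := ENNReal.toReal_nonneg
      have hq : ∀ x, ∀ t : ℝ, 0 < t → t < 1 →
          |invCDF (η x) t - invCDF (η' x) t| ≤ b := by
        intro x t ht0 ht1
        have h1 : ENNReal.ofReal |invCDF (η x) t - invCDF (η' x) t| ≤ wbar η η' := by
          refine le_trans ?_ (le_iSup (fun x => winf (η x) (η' x)) x)
          exact le_iSup (fun s : Set.Ioo (0:ℝ) 1 =>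
            ENNReal.ofReal |invCDF (η x) s - invCDF (η' x) s|) ⟨t, ht0, ht1⟩
        exact (ENNReal.ofReal_le_iff_le_toReal hB).mp h1
      have hc1 : ∀ x y, cdf (η x) y ≤ cdf (η' x) (y + b) := by
        intro x
        apply cdf_le_cdf_add_of_invCDF
        intro t ht0 ht1
        have h2 := hq x t ht0 ht1
        rw [abs_sub_le_iff] at h2
        linarith [h2.2]
      have hc2 : ∀ x y, cdf (η' x) y ≤ cdf (η x) (y + b) := by
        intro x
        apply cdf_le_cdf_add_of_invCDF
        intro t ht0 ht1
        have h2 := hq x t ht0 ht1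
        rw [abs_sub_le_iff] at h2
        linarith [h2.1]
      have hbc1 := bellman_cdf_le P hP hγ η' η hη' hη hb0 hc2
      have hbc2 := bellman_cdf_le P hP hγ η η' hη hη' hb0 hc1
      have hqb : ∀ x, ∀ t : ℝ, 0 < t → t < 1 →
          |invCDF (bellman P γ η x) t - invCDF (bellman P γ η' x) t| ≤ γ * b := by
        intro x t ht0 ht1
        rw [abs_sub_le_iff]
        constructor
        · have h3 := invCDF_le_invCDF_add _ _ (hbc1 x) ht0 ht1
          linarith
        · have h3 := invCDF_le_invCDF_add _ _ (hbc2 x) ht0 ht1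
          linarith
      calc wbar (bellman P γ η) (bellman P γ η')
          ≤ ENNReal.ofReal (γ * b) := by
            apply iSup_le
            intro x
            apply iSup_le
            rintro ⟨t, ht0, ht1⟩
            exact ENNReal.ofReal_le_ofReal (hqb x t ht0 ht1)
        _ = ENNReal.ofReal γ * wbar η η' := by
            rw [ENNReal.ofReal_mul hγ0, hbdef, ENNReal.ofReal_toReal hB]
end

section
/- The quantile projection operator Π^λ : P(ℝ)^X → P(ℝ)^X is a non-expansion with respect to w̄_∞: for any η, η' ∈ P(ℝ)^X and any λ ∈ [0,1]^{X×[m]}, w̄_∞(Π^λ η, Π^λ η') ≤ w̄_∞(η, η') (as an inequality in [0,∞]). -/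
open MeasureTheory ProbabilityTheory Set
open scoped ENNReal
open Filter Topology

section basic
variable (ν : Measure ℝ)

lemma exists_lt_cdf {τ : ℝ} (hτ : τ < 1) : ∃ y, τ < cdf ν y :=
  ((tendsto_cdf_atTop ν).eventually (eventually_gt_nhds hτ)).exists

lemma exists_cdf_lt {τ : ℝ} (hτ : 0 < τ) : ∃ y, cdf ν y < τ :=
  ((tendsto_cdf_atBot ν).eventually (eventually_lt_nhds hτ)).exists

lemma nonempty_le_set {τ : ℝ} (hτ : τ < 1) : {y | τ ≤ cdf ν y}.Nonempty := by
  obtain ⟨y, hy⟩ := exists_lt_cdf ν hτ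
  exact ⟨y, le_of_lt hy⟩

lemma nonempty_lt_set {τ : ℝ} (hτ : τ < 1) : {y | τ < cdf ν y}.Nonempty :=
  exists_lt_cdf ν hτ

lemma bddBelow_le_set {τ : ℝ} (hτ : 0 < τ) : BddBelow {y | τ ≤ cdf ν y} := by
  obtain ⟨y0, hy0⟩ := exists_cdf_lt ν hτ
  refine ⟨y0, fun z hz => ?_⟩
  by_contra h
  exact absurd (le_trans hz (monotone_cdf ν (le_of_not_ge h))) (not_le.2 hy0)

lemma bddBelow_lt_set {τ : ℝ} (hτ : 0 < τ) : BddBelow {y | τ < cdf ν y} := by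
  obtain ⟨b, hb⟩ := bddBelow_le_set ν hτ
  exact ⟨b, fun y hy => hb (le_of_lt (show τ < cdf ν y from hy))⟩

lemma invCDF_le_upInvCDF {τ : ℝ} (hτ0 : 0 < τ) (hτ1 : τ < 1) :
    invCDF ν τ ≤ upInvCDF ν τ :=
  csInf_le_csInf (bddBelow_le_set ν hτ0) (nonempty_lt_set ν hτ1)
    (fun y hy => le_of_lt (show τ < cdf ν y from hy))

lemma upInvCDF_le_invCDF {τ τ' : ℝ} (hτ0 : 0 < τ) (h : τ < τ') (hτ'1 : τ' < 1) :
    upInvCDF ν τ ≤ invCDF ν τ' :=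
  csInf_le_csInf (bddBelow_lt_set ν hτ0) (nonempty_le_set ν hτ'1)
    (fun y hy => lt_of_lt_of_le h hy)

lemma invCDF_le_of_mem {τ y : ℝ} (hτ0 : 0 < τ) (hy : τ ≤ cdf ν y) : invCDF ν τ ≤ y :=
  csInf_le (bddBelow_le_set ν hτ0) hy

end basic

lemma upInvCDF_sub_le (ν ν' : Measure ℝ) {τ c : ℝ} (hτ0 : 0 < τ) (hτ1 : τ < 1)
    (h : ∀ s ∈ Set.Ioo (0:ℝ) 1, invCDF ν s - invCDF ν' s ≤ c) :
    upInvCDF ν τ - upInvCDF ν' τ ≤ c := by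
  have key : upInvCDF ν τ - c ≤ upInvCDF ν' τ := by
    refine le_csInf (nonempty_lt_set ν' hτ1) (fun y hy => ?_)
    have hy' : τ < cdf ν' y := hy
    set s := min (cdf ν' y) ((τ + 1) / 2) with hs
    have hτs : τ < s := lt_min hy' (by linarith)
    have hs1 : s < 1 := lt_of_le_of_lt (min_le_right _ _) (by linarith)
    have hs0 : 0 < s := lt_trans hτ0 hτs
    have h1 : invCDF ν' s ≤ y := invCDF_le_of_mem ν' hs0 (min_le_left _ _)
    have h2 : upInvCDF ν τ ≤ invCDF ν s := upInvCDF_le_invCDF ν hτ0 hτs hs1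
    have h3 := h s ⟨hs0, hs1⟩
    linarith
  linarith

lemma abs_upInvCDF_sub_le (ν ν' : Measure ℝ) {τ c : ℝ} (hτ0 : 0 < τ) (hτ1 : τ < 1)
    (h : ∀ s ∈ Set.Ioo (0:ℝ) 1, |invCDF ν s - invCDF ν' s| ≤ c) :
    |upInvCDF ν τ - upInvCDF ν' τ| ≤ c := by
  rw [abs_sub_le_iff]
  constructor
  · exact upInvCDF_sub_le ν ν' hτ0 hτ1 (fun s hs => (abs_le.1 (h s hs)).2)
  · exact upInvCDF_sub_le ν' ν hτ0 hτ1 (fun s hs => by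
      have := (abs_le.1 (h s hs)).1; linarith)

instance paramDistOne_prob {m : ℕ} [NeZero m] (θ : Fin m → ℝ) :
    IsProbabilityMeasure (paramDistOne θ) := by
  constructor
  simp only [paramDistOne, Measure.smul_apply, Measure.coe_finset_sum, Finset.sum_apply,
    Measure.dirac_apply_of_mem (mem_univ _), smul_eq_mul]
  rw [Finset.sum_const, Finset.card_univ, Fintype.card_fin, nsmul_eq_mul, mul_one]
  rw [ENNReal.inv_mul_cancel (by exact_mod_cast (NeZero.pos m).ne') (by simp)]

lemma cdf_paramDistOne {m : ℕ} (hm : 0 < m) (θ : Fin m → ℝ) (y : ℝ) :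
    cdf (paramDistOne θ) y
      = (Finset.univ.filter (fun i => θ i ≤ y)).card / m := by
  have : NeZero m := ⟨hm.ne'⟩
  rw [cdf_eq_real, measureReal_def]
  have h1 : (paramDistOne θ) (Iic y)
      = (m : ℝ≥0∞)⁻¹ * (Finset.univ.filter (fun i => θ i ≤ y)).card := by
    simp only [paramDistOne, Measure.smul_apply, Measure.coe_finset_sum, Finset.sum_apply,
      smul_eq_mul]
    congr 1
    rw [← Finset.sum_boole]
    refine Finset.sum_congr rfl (fun i _ => ?_)
    rw [Measure.dirac_apply' _ measurableSet_Iic]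
    by_cases h : θ i ≤ y <;> simp [h]
  rw [h1, ENNReal.toReal_mul, ENNReal.toReal_inv]
  simp [div_eq_inv_mul]

noncomputable def qidx (m : ℕ) (t : ℝ) : ℕ := ⌈t * m⌉₊ - 1

lemma qidx_spec {m : ℕ} (hm : 0 < m) {t : ℝ} (ht : t ∈ Set.Ioo (0:ℝ) 1) :
    qidx m t < m ∧ (qidx m t : ℝ) < t * m ∧ t * m ≤ qidx m t + 1 := by
  obtain ⟨ht0, ht1⟩ := ht
  have hm0 : (0:ℝ) < m := by exact_mod_cast hm
  have htm0 : 0 < t * m := mul_pos ht0 hm0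
  have hceil1 : 1 ≤ ⌈t * m⌉₊ := Nat.one_le_iff_ne_zero.2 (by
    simpa [Nat.ceil_eq_zero, not_le] using htm0.not_ge ∘ fun h => h)
  have hsucc : qidx m t + 1 = ⌈t * m⌉₊ := Nat.succ_pred_eq_of_pos hceil1
  have hle : t * m ≤ (qidx m t : ℝ) + 1 := by
    have := Nat.le_ceil (t * m)
    rw [← hsucc] at this
    exact_mod_cast this
  have hlt : (qidx m t : ℝ) < t * m := by
    have h1 : (⌈t * m⌉₊ : ℝ) < t * m + 1 := Nat.ceil_lt_add_one htm0.le
    have h2 : (qidx m t : ℝ) = (⌈t * m⌉₊ : ℝ) - 1 := by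
      rw [qidx, Nat.cast_sub hceil1, Nat.cast_one]
    linarith
  have hltm : qidx m t < m := by
    have : (qidx m t : ℝ) < m := lt_of_lt_of_le hlt (by nlinarith)
    exact_mod_cast this
  exact ⟨hltm, hlt, hle⟩

lemma invCDF_paramDistOne {m : ℕ} (hm : 0 < m) {θ : Fin m → ℝ} (hθ : Monotone θ)
    {t : ℝ} (ht : t ∈ Set.Ioo (0:ℝ) 1) :
    invCDF (paramDistOne θ) t = θ ⟨qidx m t, (qidx_spec hm ht).1⟩ := by
  obtain ⟨hkm, hklt, hkle⟩ := qidx_spec hm ht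
  set k : Fin m := ⟨qidx m t, hkm⟩ with hk
  have hm0 : (0:ℝ) < m := by exact_mod_cast hm
  -- membership
  have hmem : t ≤ cdf (paramDistOne θ) (θ k) := by
    rw [cdf_paramDistOne hm]
    have hsub : Finset.Iic k ⊆ Finset.univ.filter (fun i => θ i ≤ θ k) := by
      intro i hi
      simp only [Finset.mem_filter, Finset.mem_univ, true_and]
      exact hθ (Finset.mem_Iic.1 hi)
    have hcard : (qidx m t : ℝ) + 1 ≤ (Finset.univ.filter (fun i => θ i ≤ θ k)).card := by
      have := Finset.card_le_card hsub
      rw [Fin.card_Iic] at this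
      exact_mod_cast this
    rw [le_div_iff₀ hm0]
    linarith
  -- lower bound
  have hlb : ∀ y ∈ {y | t ≤ cdf (paramDistOne θ) y}, θ k ≤ y := by
    intro y hy
    have hy' : t ≤ cdf (paramDistOne θ) y := hy
    by_contra hcon
    push_neg at hcon
    have hsub : Finset.univ.filter (fun i => θ i ≤ y) ⊆ Finset.Iio k := by
      intro i hi
      simp only [Finset.mem_filter, Finset.mem_univ, true_and] at hi
      rw [Finset.mem_Iio]
      by_contra hik
      push_neg at hik
      exact absurd (le_trans (hθ hik) hi) (not_le.2 hcon)
    have hcard : ((Finset.univ.filter (fun i => θ i ≤ y)).card : ℝ) ≤ qidx m t := by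
      have := Finset.card_le_card hsub
      rw [Fin.card_Iio] at this
      exact_mod_cast this
    rw [cdf_paramDistOne hm, le_div_iff₀ hm0] at hy'
    linarith
  exact le_antisymm (csInf_le ⟨θ k, hlb⟩ hmem) (le_csInf ⟨θ k, hmem⟩ hlb)

lemma qlevel_mem {m : ℕ} (hm : 0 < m) (i : Fin m) : qlevel m i ∈ Set.Ioo (0:ℝ) 1 := by
  have hm0 : (0:ℝ) < m := by exact_mod_cast hm
  have hi : (i : ℝ) ≤ m - 1 := by
    have := i.isLt
    have : (i : ℝ) + 1 ≤ m := by exact_mod_cast this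
    linarith
  constructor
  · rw [qlevel]
    apply div_pos (by positivity) (by linarith)
  · rw [qlevel, div_lt_one (by linarith)]
    linarith

lemma qlevel_strictMono {m : ℕ} (hm : 0 < m) : StrictMono (qlevel m) := by
  intro i j hij
  have hm0 : (0:ℝ) < m := by exact_mod_cast hm
  have : (i : ℝ) < j := by exact_mod_cast hij
  rw [qlevel, qlevel, div_lt_div_iff_of_pos_right (by linarith : (0:ℝ) < 2 * m)]
  linarith

lemma projTheta_monotone (ν : Measure ℝ) {m : ℕ} (hm : 0 < m) (lam : Fin m → ℝ)
    (hlam : ∀ i, lam i ∈ Set.Icc (0:ℝ) 1) :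
    Monotone (fun i => (1 - lam i) * invCDF ν (qlevel m i)
      + lam i * upInvCDF ν (qlevel m i)) := by
  intro i j hij
  rcases eq_or_lt_of_le hij with h | h
  · rw [h]
  · obtain ⟨hi0, hi1⟩ := qlevel_mem hm i
    obtain ⟨hj0, hj1⟩ := qlevel_mem hm j
    have hqQi : invCDF ν (qlevel m i) ≤ upInvCDF ν (qlevel m i) :=
      invCDF_le_upInvCDF ν hi0 hi1
    have hqQj : invCDF ν (qlevel m j) ≤ upInvCDF ν (qlevel m j) :=
      invCDF_le_upInvCDF ν hj0 hj1
    have hQq : upInvCDF ν (qlevel m i) ≤ invCDF ν (qlevel m j) :=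
      upInvCDF_le_invCDF ν hi0 (qlevel_strictMono hm h) hj1
    have e1 : (1 - lam i) * invCDF ν (qlevel m i) ≤ (1 - lam i) * upInvCDF ν (qlevel m i) :=
      mul_le_mul_of_nonneg_left hqQi (by linarith [(hlam i).2])
    have e2 : lam j * invCDF ν (qlevel m j) ≤ lam j * upInvCDF ν (qlevel m j) :=
      mul_le_mul_of_nonneg_left hqQj (hlam j).1
    simp only
    nlinarith [hQq, e1, e2]


/-- The quantile projection `Π^λ` is a non-expansion in `w̄_∞`. -/
theorem quantile_projection_nonexpansion
    {X : Type*} [Fintype X] {m : ℕ} (hm : 0 < m)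
    (lam : X → Fin m → ℝ) (hlam : lam ∈ unitCube X m)
    (η η' : X → Measure ℝ)
    (hη : ∀ x, IsProbabilityMeasure (η x)) (hη' : ∀ x, IsProbabilityMeasure (η' x)) :
    wbar (proj lam η) (proj lam η') ≤ wbar η η' := by
  have hlam' : ∀ x i, lam x i ∈ Set.Icc (0:ℝ) 1 := hlam
  unfold wbar winf
  refine iSup_mono (fun x => ?_)
  by_cases htop : (⨆ t : Set.Ioo (0:ℝ) 1,
      ENNReal.ofReal |invCDF (η x) t - invCDF (η' x) t|) = ⊤
  · rw [htop]; exact le_top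
  set c := (⨆ t : Set.Ioo (0:ℝ) 1,
      ENNReal.ofReal |invCDF (η x) t - invCDF (η' x) t|).toReal with hc
  have hdiff : ∀ s ∈ Set.Ioo (0:ℝ) 1, |invCDF (η x) s - invCDF (η' x) s| ≤ c := by
    intro s hs
    have hle : ENNReal.ofReal |invCDF (η x) s - invCDF (η' x) s|
        ≤ ⨆ t : Set.Ioo (0:ℝ) 1, ENNReal.ofReal |invCDF (η x) t - invCDF (η' x) t| :=
      le_iSup (fun t : Set.Ioo (0:ℝ) 1 =>
        ENNReal.ofReal |invCDF (η x) ↑t - invCDF (η' x) ↑t|) ⟨s, hs⟩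
    have h2 := ENNReal.toReal_mono htop hle
    rwa [ENNReal.toReal_ofReal (abs_nonneg _)] at h2
  refine iSup_le (fun tsub => ?_)
  obtain ⟨t, ht⟩ := tsub
  have hmono : Monotone (projParam lam η x) := projTheta_monotone (η x) hm (lam x) (hlam' x)
  have hmono' : Monotone (projParam lam η' x) := projTheta_monotone (η' x) hm (lam x) (hlam' x)
  have e1 : invCDF (proj lam η x) t = projParam lam η x ⟨qidx m t, (qidx_spec hm ht).1⟩ :=
    invCDF_paramDistOne hm hmono ht
  have e2 : invCDF (proj lam η' x) t = projParam lam η' x ⟨qidx m t, (qidx_spec hm ht).1⟩ :=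
    invCDF_paramDistOne hm hmono' ht
  set k : Fin m := ⟨qidx m t, (qidx_spec hm ht).1⟩ with hk
  have hτ := qlevel_mem hm k
  have h1 := hdiff (qlevel m k) hτ
  have h2 := abs_upInvCDF_sub_le (η x) (η' x) hτ.1 hτ.2 hdiff
  have hbound : |projParam lam η x k - projParam lam η' x k| ≤ c := by
    have key : projParam lam η x k - projParam lam η' x k
        = (1 - lam x k) * (invCDF (η x) (qlevel m k) - invCDF (η' x) (qlevel m k))
          + lam x k * (upInvCDF (η x) (qlevel m k) - upInvCDF (η' x) (qlevel m k)) := by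
      simp only [projParam]; ring
    obtain ⟨a1, a2⟩ := abs_le.1 h1
    obtain ⟨b1, b2⟩ := abs_le.1 h2
    obtain ⟨hl0, hl1⟩ := hlam' x k
    have p1 : (1 - lam x k) * (invCDF (η x) (qlevel m k) - invCDF (η' x) (qlevel m k))
        ≤ (1 - lam x k) * c := mul_le_mul_of_nonneg_left a2 (by linarith)
    have p2 : (1 - lam x k) * (-c)
        ≤ (1 - lam x k) * (invCDF (η x) (qlevel m k) - invCDF (η' x) (qlevel m k)) :=
      mul_le_mul_of_nonneg_left a1 (by linarith)
    have p3 : lam x k * (upInvCDF (η x) (qlevel m k) - upInvCDF (η' x) (qlevel m k))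
        ≤ lam x k * c := mul_le_mul_of_nonneg_left b2 hl0
    have p4 : lam x k * (-c)
        ≤ lam x k * (upInvCDF (η x) (qlevel m k) - upInvCDF (η' x) (qlevel m k)) :=
      mul_le_mul_of_nonneg_left b1 hl0
    rw [key, abs_le]
    constructor <;> nlinarith
  calc ENNReal.ofReal |invCDF (proj lam η x) t - invCDF (proj lam η' x) t|
      ≤ ENNReal.ofReal c := ENNReal.ofReal_le_ofReal (by rw [e1, e2]; exact hbound)
    _ = _ := ENNReal.ofReal_toReal htop
end

section
/- Lyapunov function for the QTD differential inclusion: the function L(θ) = min_{λ ∈ [0,1]^{X×[m]}} max_{(x,i)} |θ(x,i) − θ̂^π_λ(x,i)| is a Lyapunov function for the differential inclusion ∂_t ϑ_t(x,i) ∈ [τ_i − F_{(T^π ϑ_t)(x)}(ϑ_t(x,i)), τ_i − F_{(T^π ϑ_t)(x)}(ϑ_t(x,i)−)] and the set of QDP fixed points Λ = {θ̂^π_λ : λ ∈ [0,1]^{X×[m]}}: L is continuous, nonnegative, vanishes exactly on Λ, and along any solution (ϑ_t)_{t≥0} of the differential inclusion, L(ϑ_t) < L(ϑ_s) whenever 0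 ≤ s < t and ϑ_s ∉ Λ. -/
open MeasureTheory ProbabilityTheory Set
open scoped ENNReal

set_option maxHeartbeats 1000000

namespace QTDAux

section PhaseA


variable {ν : Measure ℝ} [IsProbabilityMeasure ν] {τ : ℝ}

lemma exists_cdf_gt (hτ : τ < 1) : ∃ y, τ < cdf ν y := by
  have h := (tendsto_cdf_atTop ν).eventually_const_lt hτ
  exact h.exists

lemma exists_cdf_lt (hτ : 0 < τ) : ∃ y, cdf ν y < τ := by
  have h := (tendsto_cdf_atBot ν).eventually_lt_const hτ
  exact h.exists

lemma setq_nonempty (hτ : τ < 1) : {y | τ ≤ cdf ν y}.Nonempty := by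
  obtain ⟨y, hy⟩ := exists_cdf_gt (ν := ν) hτ
  exact ⟨y, hy.le⟩

lemma setq_bddBelow (hτ : 0 < τ) : BddBelow {y | τ ≤ cdf ν y} := by
  obtain ⟨y0, hy0⟩ := exists_cdf_lt (ν := ν) hτ
  refine ⟨y0, fun z hz => ?_⟩
  by_contra hzy
  push_neg at hzy
  exact absurd (((cdf ν).mono hzy.le).trans_lt hy0) (not_lt.2 hz)

lemma setqb_nonempty (hτ : τ < 1) : {y | τ < cdf ν y}.Nonempty :=
  exists_cdf_gt hτ

lemma setqb_bddBelow (hτ : 0 < τ) : BddBelow {y | τ < cdf ν y} := by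
  obtain ⟨y0, hy0⟩ := exists_cdf_lt (ν := ν) hτ
  refine ⟨y0, fun z hz => ?_⟩
  by_contra hzy
  push_neg at hzy
  exact absurd (((cdf ν).mono hzy.le).trans_lt hy0) (not_lt.2 hz.le)

lemma invCDF_le (hτ : 0 < τ) {y : ℝ} (hy : τ ≤ cdf ν y) : invCDF ν τ ≤ y :=
  csInf_le (setq_bddBelow hτ) hy

lemma cdf_invCDF (hτ0 : 0 < τ) (hτ1 : τ < 1) : τ ≤ cdf ν (invCDF ν τ) := by
  by_contra hc
  push_neg at hc
  have hrc : ContinuousWithinAt (cdf ν) (Ici (invCDF ν τ)) (invCDF ν τ) :=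
    (cdf ν).right_continuous _
  have hmem : (cdf ν) ⁻¹' (Iio τ) ∈ nhdsWithin (invCDF ν τ) (Ici (invCDF ν τ)) :=
    hrc (Iio_mem_nhds hc)
  rw [Metric.mem_nhdsWithin_iff] at hmem
  obtain ⟨δ, hδ, hball⟩ := hmem
  obtain ⟨y1, hy1mem, hy1lt⟩ := exists_lt_of_csInf_lt (setq_nonempty hτ1)
    (lt_add_of_pos_right (invCDF ν τ) hδ)
  have hy1ge : invCDF ν τ ≤ y1 := csInf_le (setq_bddBelow hτ0) hy1mem
  have : y1 ∈ Metric.ball (invCDF ν τ) δ ∩ Ici (invCDF ν τ) := by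
    constructor
    · rw [Metric.mem_ball, Real.dist_eq, abs_sub_lt_iff]
      constructor <;> linarith
    · exact hy1ge
  have := hball this
  simp only [mem_preimage, mem_Iio] at this
  exact absurd hy1mem (not_le.2 this)

lemma cdf_le_of_lt_upInvCDF (hτ0 : 0 < τ) {y : ℝ} (hy : y < upInvCDF ν τ) : cdf ν y ≤ τ := by
  by_contra hc
  push_neg at hc
  exact absurd (csInf_le (setqb_bddBelow hτ0) hc) (not_le.2 hy)

lemma le_upInvCDF (hτ1 : τ < 1) {w : ℝ} (hw : ∀ y, y < w → cdf ν y ≤ τ) :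
    w ≤ upInvCDF ν τ := by
  refine le_csInf (setqb_nonempty hτ1) fun z hz => ?_
  by_contra hc
  push_neg at hc
  exact absurd (hw z hc) (not_le.2 hz)

lemma invCDF_le_upInvCDF (hτ0 : 0 < τ) (hτ1 : τ < 1) : invCDF ν τ ≤ upInvCDF ν τ := by
  refine csInf_le_csInf (setq_bddBelow hτ0) (setqb_nonempty hτ1) fun z hz => ?_
  simp only [mem_setOf_eq] at hz ⊢
  exact hz.le

lemma invCDF_mono_meas {ν' : Measure ℝ} [IsProbabilityMeasure ν']
    (hτ0 : 0 < τ) (hτ1 : τ < 1) (h : ∀ z, cdf ν' z ≤ cdf ν z) :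
    invCDF ν τ ≤ invCDF ν' τ :=
  csInf_le_csInf (setq_bddBelow hτ0) (setq_nonempty hτ1) (fun z hz => le_trans hz (h z))

lemma upInvCDF_mono_meas {ν' : Measure ℝ} [IsProbabilityMeasure ν']
    (hτ0 : 0 < τ) (hτ1 : τ < 1) (h : ∀ z, cdf ν' z ≤ cdf ν z) :
    upInvCDF ν τ ≤ upInvCDF ν' τ :=
  csInf_le_csInf (setqb_bddBelow hτ0) (setqb_nonempty hτ1) (fun z hz => lt_of_lt_of_le hz (h z))


end PhaseA

section PhaseB


variable {X : Type*} [Fintype X] [MeasurableSpace X] [MeasurableSingletonClass X] {m : ℕ}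

lemma kernel_apply (θ : X → Fin m → ℝ) (γ : ℝ) (p : ℝ × X) {s : Set ℝ} (hs : MeasurableSet s) :
    (paramDist θ p.2).map (fun z => p.1 + γ * z) s
      = (m : ℝ≥0∞)⁻¹ * ∑ j : Fin m, s.indicator (fun _ => (1:ℝ≥0∞)) (p.1 + γ * θ p.2 j) := by
  rw [paramDist, paramDistOne,
    Measure.map_apply (by fun_prop) hs, Measure.smul_apply, Measure.finset_sum_apply]
  rw [smul_eq_mul]
  congr 1
  refine Finset.sum_congr rfl fun j _ => ?_
  have hsp : MeasurableSet ((fun z : ℝ => p.1 + γ * z) ⁻¹' s) :=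
    (by fun_prop : Measurable fun z : ℝ => p.1 + γ * z) hs
  rw [Measure.dirac_apply' _ hsp]
  by_cases hmem : p.1 + γ * θ p.2 j ∈ s
  · rw [Set.indicator_of_mem (by exact hmem) , Set.indicator_of_mem hmem]
    rfl
  · rw [Set.indicator_of_notMem (by exact hmem), Set.indicator_of_notMem hmem]

lemma kernel_measurable (θ : X → Fin m → ℝ) (γ : ℝ) :
    Measurable (fun p : ℝ × X => (paramDist θ p.2).map (fun z => p.1 + γ * z)) := by
  apply Measure.measurable_of_measurable_coe
  intro s hs
  simp_rw [kernel_apply θ γ _ hs]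
  refine Measurable.const_mul (Finset.measurable_sum _ fun j _ => ?_) _
  have hmeas : Measurable fun p : ℝ × X => p.1 + γ * θ p.2 j :=
    measurable_fst.add ((measurable_of_countable (fun x : X => γ * θ x j)).comp measurable_snd)
  exact (measurable_const.indicator hs).comp hmeas

lemma bellman_apply (P : X → Measure (ℝ × X)) (γ : ℝ) (θ : X → Fin m → ℝ) (x : X)
    {s : Set ℝ} (hs : MeasurableSet s) :
    bellman P γ (paramDist θ) x s
      = ∫⁻ p, (m : ℝ≥0∞)⁻¹ * ∑ j : Fin m, s.indicator (fun _ => (1:ℝ≥0∞)) (p.1 + γ * θ p.2 j)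
          ∂(P x) := by
  rw [bellman, Measure.bind_apply hs (kernel_measurable θ γ).aemeasurable]
  exact lintegral_congr fun p => kernel_apply θ γ p hs

lemma bellman_isProb (P : X → Measure (ℝ × X)) (hP : ∀ x, IsProbabilityMeasure (P x))
    (γ : ℝ) (hm : 0 < m) (θ : X → Fin m → ℝ) (x : X) :
    IsProbabilityMeasure (bellman P γ (paramDist θ) x) := by
  constructor
  rw [bellman_apply P γ θ x MeasurableSet.univ]
  have heq : ∀ p : ℝ × X,
      (m : ℝ≥0∞)⁻¹ * ∑ j : Fin m, (univ : Set ℝ).indicator (fun _ => (1:ℝ≥0∞)) (p.1 + γ * θ p.2 j)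
        = 1 := by
    intro p
    simp only [Set.indicator_univ]
    simp only [Finset.sum_const, Finset.card_univ, Fintype.card_fin, nsmul_eq_mul, mul_one]
    exact ENNReal.inv_mul_cancel (by exact_mod_cast hm.ne') (ENNReal.natCast_ne_top m)
  rw [lintegral_congr heq]
  haveI := hP x
  simp

lemma bellman_cdf_mono (P : X → Measure (ℝ × X)) (hP : ∀ x, IsProbabilityMeasure (P x))
    {γ : ℝ} (hγ0 : 0 ≤ γ) (hm : 0 < m) (θ θ' : X → Fin m → ℝ)
    (hθ : ∀ x i, θ x i ≤ θ' x i) (x : X) (z : ℝ) :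
    cdf (bellman P γ (paramDist θ') x) z ≤ cdf (bellman P γ (paramDist θ) x) z := by
  haveI := bellman_isProb P hP γ hm θ x
  haveI := bellman_isProb P hP γ hm θ' x
  rw [cdf_eq_real, cdf_eq_real, measureReal_def, measureReal_def]
  refine ENNReal.toReal_mono (measure_ne_top _ _) ?_
  rw [bellman_apply P γ θ x measurableSet_Iic, bellman_apply P γ θ' x measurableSet_Iic]
  refine lintegral_mono fun p => ?_
  refine mul_le_mul' le_rfl (Finset.sum_le_sum fun j _ => ?_)
  by_cases h : p.1 + γ * θ' p.2 j ≤ z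
  · have h2 : p.1 + γ * θ p.2 j ≤ z := by
      have := mul_le_mul_of_nonneg_left (hθ p.2 j) hγ0
      linarith
    simp [Set.indicator_apply, h, h2]
  · simp [Set.indicator_apply, h]

lemma bellman_cdf_translate (P : X → Measure (ℝ × X)) (hP : ∀ x, IsProbabilityMeasure (P x))
    (γ : ℝ) (hm : 0 < m) (θ : X → Fin m → ℝ) (c : ℝ) (x : X) (z : ℝ) :
    cdf (bellman P γ (paramDist (fun x i => θ x i + c)) x) z
      = cdf (bellman P γ (paramDist θ) x) (z - γ * c) := by
  haveI := bellman_isProb P hP γ hm θ x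
  haveI := bellman_isProb P hP γ hm (fun x i => θ x i + c) x
  rw [cdf_eq_real, cdf_eq_real, measureReal_def, measureReal_def]
  congr 1
  rw [bellman_apply P γ _ x measurableSet_Iic, bellman_apply P γ θ x measurableSet_Iic]
  refine lintegral_congr fun p => ?_
  congr 1
  refine Finset.sum_congr rfl fun j _ => ?_
  have hiff : (p.1 + γ * (θ p.2 j + c) ≤ z) ↔ (p.1 + γ * θ p.2 j ≤ z - γ * c) := by
    constructor <;> intro h <;> nlinarith
  simp only [Set.indicator_apply, mem_Iic]
  split_ifs with h1 h2 h2
  · rfl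
  · exact absurd (hiff.1 h1) h2
  · exact absurd (hiff.2 h2) h1
  · rfl

lemma bellman_cdf_sandw (P : X → Measure (ℝ × X)) (hP : ∀ x, IsProbabilityMeasure (P x))
    {γ : ℝ} (hγ0 : 0 ≤ γ) (hm : 0 < m) (θ θ' : X → Fin m → ℝ) {c : ℝ}
    (h : ∀ x i, |θ' x i - θ x i| ≤ c) (x : X) (z : ℝ) :
    cdf (bellman P γ (paramDist θ') x) z ≤ cdf (bellman P γ (paramDist θ) x) (z + γ * c) := by
  have h1 : ∀ x i, (fun x i => θ x i + (-c)) x i ≤ θ' x i := fun x i => by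
    have h2 := abs_le.1 (h x i)
    show θ x i + (-c) ≤ θ' x i
    linarith [h2.1]
  calc cdf (bellman P γ (paramDist θ') x) z
      ≤ cdf (bellman P γ (paramDist (fun x i => θ x i + (-c))) x) z :=
        bellman_cdf_mono P hP hγ0 hm _ θ' h1 x z
    _ = cdf (bellman P γ (paramDist θ) x) (z - γ * (-c)) :=
        bellman_cdf_translate P hP γ hm θ (-c) x z
    _ = cdf (bellman P γ (paramDist θ) x) (z + γ * c) := by ring_nf


end PhaseB

section PhaseC


variable {X : Type*} [Fintype X] [MeasurableSpace X] [MeasurableSingletonClass X] {m : ℕ}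

lemma qlevel_pos (hm : 0 < m) (i : Fin m) : 0 < qlevel m i := by
  have h1 : (0:ℝ) < 2 * m := by positivity
  have h2 : (0:ℝ) ≤ (i : ℝ) := Nat.cast_nonneg _
  exact div_pos (by linarith) h1

lemma qlevel_lt_one (hm : 0 < m) (i : Fin m) : qlevel m i < 1 := by
  have h1 : (0:ℝ) < 2 * m := by positivity
  rw [qlevel, div_lt_one h1]
  have : (i : ℝ) ≤ (m : ℝ) - 1 := by
    have := i.isLt
    have : (i : ℝ) + 1 ≤ (m : ℝ) := by exact_mod_cast this
    linarith
  linarith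

def Band (P : X → Measure (ℝ × X)) (γ : ℝ) {m : ℕ} (θ : X → Fin m → ℝ) : Prop :=
  ∀ x i, qlevel m i ≤ cdf (bellman P γ (paramDist θ) x) (θ x i) ∧
    ∀ y, y < θ x i → cdf (bellman P γ (paramDist θ) x) y ≤ qlevel m i

lemma band_of_fix (P : X → Measure (ℝ × X)) (hP : ∀ x, IsProbabilityMeasure (P x))
    (γ : ℝ) (hm : 0 < m) (lam θ : X → Fin m → ℝ)
    (hlam : ∀ x i, 0 ≤ lam x i ∧ lam x i ≤ 1)
    (hfix : projBellmanParam P γ lam θ = θ) : Band P γ θ := by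
  intro x i
  haveI := bellman_isProb P hP γ hm θ x
  set ν := bellman P γ (paramDist θ) x with hν
  have hτ0 := qlevel_pos hm i
  have hτ1 := qlevel_lt_one hm i
  have heq : (1 - lam x i) * invCDF ν (qlevel m i) + lam x i * upInvCDF ν (qlevel m i) = θ x i :=
    congrFun (congrFun hfix x) i
  have hq : invCDF ν (qlevel m i) ≤ upInvCDF ν (qlevel m i) := invCDF_le_upInvCDF hτ0 hτ1
  obtain ⟨hl0, hl1⟩ := hlam x i
  have h1 : invCDF ν (qlevel m i) ≤ θ x i := by nlinarith
  have h2 : θ x i ≤ upInvCDF ν (qlevel m i) := by nlinarith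
  constructor
  · exact le_trans (cdf_invCDF hτ0 hτ1) ((cdf ν).mono h1)
  · intro y hy
    exact cdf_le_of_lt_upInvCDF hτ0 (lt_of_lt_of_le hy h2)

lemma band_to_fix (P : X → Measure (ℝ × X)) (hP : ∀ x, IsProbabilityMeasure (P x))
    (γ : ℝ) (hm : 0 < m) (θ : X → Fin m → ℝ) (hband : Band P γ θ) :
    ∃ lam : X → Fin m → ℝ, (∀ x i, 0 ≤ lam x i ∧ lam x i ≤ 1) ∧
      projBellmanParam P γ lam θ = θ := by
  classical
  refine ⟨fun x i =>
    if h : 0 < upInvCDF (bellman P γ (paramDist θ) x) (qlevel m i)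
        - invCDF (bellman P γ (paramDist θ) x) (qlevel m i)
    then (θ x i - invCDF (bellman P γ (paramDist θ) x) (qlevel m i)) /
      (upInvCDF (bellman P γ (paramDist θ) x) (qlevel m i)
        - invCDF (bellman P γ (paramDist θ) x) (qlevel m i))
    else 0, ?_, ?_⟩
  · intro x i
    haveI := bellman_isProb P hP γ hm θ x
    have hτ0 := qlevel_pos hm i
    have hτ1 := qlevel_lt_one hm i
    dsimp only
    set ν := bellman P γ (paramDist θ) x
    have h1 : invCDF ν (qlevel m i) ≤ θ x i := invCDF_le hτ0 (hband x i).1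
    have h2 : θ x i ≤ upInvCDF ν (qlevel m i) := le_upInvCDF hτ1 (fun y hy => (hband x i).2 y hy)
    by_cases h : 0 < upInvCDF ν (qlevel m i) - invCDF ν (qlevel m i)
    · rw [dif_pos h]
      constructor
      · apply div_nonneg (by linarith) (by linarith)
      · rw [div_le_one h]; linarith
    · rw [dif_neg h]; exact ⟨le_refl 0, zero_le_one⟩
  · funext x i
    haveI := bellman_isProb P hP γ hm θ x
    have hτ0 := qlevel_pos hm i
    have hτ1 := qlevel_lt_one hm i
    simp only [projBellmanParam, projParam]
    set ν := bellman P γ (paramDist θ) x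
    have h1 : invCDF ν (qlevel m i) ≤ θ x i := invCDF_le hτ0 (hband x i).1
    have h2 : θ x i ≤ upInvCDF ν (qlevel m i) := le_upInvCDF hτ1 (fun y hy => (hband x i).2 y hy)
    by_cases h : 0 < upInvCDF ν (qlevel m i) - invCDF ν (qlevel m i)
    · rw [dif_pos h]
      field_simp
      ring
    · rw [dif_neg h]
      push_neg at h
      have : upInvCDF ν (qlevel m i) = invCDF ν (qlevel m i) :=
        le_antisymm (by linarith) (invCDF_le_upInvCDF hτ0 hτ1)
      rw [this] at h2 ⊢
      have : θ x i = invCDF ν (qlevel m i) := le_antisymm h2 h1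
      rw [this]; ring

lemma band_approx (P : X → Measure (ℝ × X)) (hP : ∀ x, IsProbabilityMeasure (P x))
    {γ : ℝ} (hγ0 : 0 ≤ γ) (hm : 0 < m) (θ : X → Fin m → ℝ)
    (h : ∀ ε, 0 < ε → ∃ θ'', Band P γ θ'' ∧ ∀ x i, |θ x i - θ'' x i| ≤ ε) :
    Band P γ θ := by
  have hγ1 : (0:ℝ) < 1 + γ := by linarith
  intro x i
  haveI := bellman_isProb P hP γ hm θ x
  have hτ0 := qlevel_pos hm i
  have hτ1 := qlevel_lt_one hm i
  constructor
  · by_contra hc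
    push_neg at hc
    have hrc : ContinuousWithinAt (cdf (bellman P γ (paramDist θ) x)) (Ici (θ x i)) (θ x i) :=
      (cdf _).right_continuous _
    have hmem : (cdf (bellman P γ (paramDist θ) x)) ⁻¹' (Iio (qlevel m i))
        ∈ nhdsWithin (θ x i) (Ici (θ x i)) := hrc (Iio_mem_nhds hc)
    rw [Metric.mem_nhdsWithin_iff] at hmem
    obtain ⟨δb, hδb, hball⟩ := hmem
    set ε0 := δb / 2 with hε0
    have hε0pos : 0 < ε0 := by positivity
    set δ := ε0 / (2 * (1 + γ)) with hδdef
    have hδpos : 0 < δ := by positivity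
    obtain ⟨θ'', hband'', hclose⟩ := h δ hδpos
    haveI := bellman_isProb P hP γ hm θ'' x
    have hsw : cdf (bellman P γ (paramDist θ'') x) (θ x i + ε0 - γ * δ)
        ≤ cdf (bellman P γ (paramDist θ) x) (θ x i + ε0 - γ * δ + γ * δ) :=
      bellman_cdf_sandw P hP hγ0 hm θ θ'' (fun x i => by
        rw [abs_sub_comm]; exact hclose x i) x _
    have harg : θ'' x i ≤ θ x i + ε0 - γ * δ := by
      have := abs_le.1 (hclose x i)
      have hge : (1 + γ) * δ = ε0 / 2 := by
        rw [hδdef]; field_simp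
      nlinarith [this.1, this.2]
    have hτle : qlevel m i ≤ cdf (bellman P γ (paramDist θ) x) (θ x i + ε0) := by
      have h1 := (hband'' x i).1
      have h2 := (cdf (bellman P γ (paramDist θ'') x)).mono harg
      have h3 : θ x i + ε0 - γ * δ + γ * δ = θ x i + ε0 := by ring
      rw [h3] at hsw
      exact le_trans (le_trans h1 h2) hsw
    have hballmem : θ x i + ε0 ∈ Metric.ball (θ x i) δb ∩ Ici (θ x i) := by
      constructor
      · rw [Metric.mem_ball, Real.dist_eq]
        have hcan : θ x i + ε0 - θ x i = ε0 := by ring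
        rw [hcan, abs_of_pos hε0pos, hε0]
        linarith
      · simp only [mem_Ici]; linarith
    have := hball hballmem
    simp only [mem_preimage, mem_Iio] at this
    exact absurd hτle (not_le.2 this)
  · intro y hy
    set δ := (θ x i - y) / (2 * (1 + γ)) with hδdef
    have hδpos : 0 < δ := by
      apply div_pos (by linarith) (by positivity)
    obtain ⟨θ'', hband'', hclose⟩ := h δ hδpos
    haveI := bellman_isProb P hP γ hm θ'' x
    have hsw : cdf (bellman P γ (paramDist θ) x) y
        ≤ cdf (bellman P γ (paramDist θ'') x) (y + γ * δ) :=
      bellman_cdf_sandw P hP hγ0 hm θ'' θ (fun x i => hclose x i) x y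
    refine le_trans hsw ((hband'' x i).2 _ ?_)
    have habs := abs_le.1 (hclose x i)
    have hlb : θ x i - δ ≤ θ'' x i := by linarith [habs.1, habs.2]
    have h2 : (1 + γ) * δ = (θ x i - y) / 2 := by
      rw [hδdef]; field_simp
    have harg : y + γ * δ < θ x i - δ := by nlinarith
    linarith


end PhaseC

section PhaseD


variable {X : Type*} [Fintype X] [MeasurableSpace X] [MeasurableSingletonClass X] {m : ℕ}


lemma tarski_box (l u : X → Fin m → ℝ) (hlu : ∀ x i, l x i ≤ u x i)
    (U : (X → Fin m → ℝ) → (X → Fin m → ℝ))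
    (hUmono : ∀ θ θ', (∀ x i, θ x i ≤ θ' x i) → ∀ x i, U θ x i ≤ U θ' x i)
    (hUbox : ∀ θ, (∀ x i, l x i ≤ θ x i ∧ θ x i ≤ u x i) →
       ∀ x i, l x i ≤ U θ x i ∧ U θ x i ≤ u x i) :
    ∃ θ', (∀ x i, l x i ≤ θ' x i ∧ θ' x i ≤ u x i) ∧ U θ' = θ' := by
  classical
  set A : Set (X → Fin m → ℝ) :=
    {θ | (∀ x i, l x i ≤ θ x i ∧ θ x i ≤ u x i) ∧ ∀ x i, θ x i ≤ U θ x i} with hA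
  have hlbox : ∀ x i, l x i ≤ l x i ∧ l x i ≤ u x i := fun x i => ⟨le_rfl, hlu x i⟩
  have hlA : l ∈ A := ⟨hlbox, fun x i => (hUbox l hlbox x i).1⟩
  set θ' : X → Fin m → ℝ := fun x i => sSup ((fun θ => θ x i) '' A) with hθ'
  have hne : ∀ x i, ((fun θ => θ x i) '' A).Nonempty := fun x i => ⟨l x i, l, hlA, rfl⟩
  have hbdd : ∀ x i, BddAbove ((fun θ => θ x i) '' A) := fun x i =>
    ⟨u x i, by rintro v ⟨θ0, hθ0, rfl⟩; exact (hθ0.1 x i).2⟩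
  have hθ'box : ∀ x i, l x i ≤ θ' x i ∧ θ' x i ≤ u x i := fun x i =>
    ⟨le_csSup (hbdd x i) ⟨l, hlA, rfl⟩,
     csSup_le (hne x i) (by rintro v ⟨θ0, hθ0, rfl⟩; exact (hθ0.1 x i).2)⟩
  have hmemle : ∀ θ0 ∈ A, ∀ x i, θ0 x i ≤ θ' x i := fun θ0 h0 x i =>
    le_csSup (hbdd x i) ⟨θ0, h0, rfl⟩
  have hsub : ∀ x i, θ' x i ≤ U θ' x i := by
    intro x i
    refine csSup_le (hne x i) ?_
    rintro v ⟨θ0, hθ0, rfl⟩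
    exact le_trans (hθ0.2 x i) (hUmono θ0 θ' (hmemle θ0 hθ0) x i)
  have hUA : U θ' ∈ A := ⟨hUbox θ' hθ'box, fun x i => hUmono θ' (U θ') hsub x i⟩
  refine ⟨θ', hθ'box, ?_⟩
  funext x i
  exact le_antisymm (hmemle (U θ') hUA x i) (hsub x i)

lemma escape [Nonempty X] (P : X → Measure (ℝ × X)) (hP : ∀ x, IsProbabilityMeasure (P x))
    {γ : ℝ} (hγ0 : 0 ≤ γ) (hγ1 : γ < 1) (hm : 0 < m)
    (θh ϑ : X → Fin m → ℝ) {D : ℝ} (hD : 0 < D)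
    (hband : Band P γ θh)
    (hdist : ∀ x i, |ϑ x i - θh x i| ≤ D)
    (hsp : ∀ x i, ϑ x i - θh x i = D →
      ∀ y, y < θh x i + (1-γ)*D → cdf (bellman P γ (paramDist θh) x) y ≤ qlevel m i)
    (hsm : ∀ x i, ϑ x i - θh x i = -D →
      qlevel m i ≤ cdf (bellman P γ (paramDist θh) x) (θh x i - (1-γ)*D)) :
    ∃ (θ' : X → Fin m → ℝ) (ε' : ℝ), 0 < ε' ∧ Band P γ θ' ∧
      ∀ x i, |ϑ x i - θ' x i| ≤ D - ε' := by
  classical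
  haveI : Nonempty (Fin m) := Fin.pos_iff_nonempty.mp hm
  set e : X × Fin m → ℝ := fun k =>
    if |ϑ k.1 k.2 - θh k.1 k.2| = D then (1-γ)*D/2
    else min ((1-γ)*D/2) ((D - |ϑ k.1 k.2 - θh k.1 k.2|)/2) with he
  have hepos : ∀ k, 0 < e k := by
    intro k
    rw [he]
    dsimp only
    split_ifs with h
    · have : 0 < 1 - γ := by linarith
      positivity
    · refine lt_min (by nlinarith : (0:ℝ) < (1-γ)*D/2) ?_
      have h1 := hdist k.1 k.2
      have h2 : |ϑ k.1 k.2 - θh k.1 k.2| < D := lt_of_le_of_ne h1 h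
      linarith
  have huniv : (Finset.univ : Finset (X × Fin m)).Nonempty := Finset.univ_nonempty
  set ε : ℝ := Finset.univ.inf' huniv e with hε
  have hεpos : 0 < ε := by
    rw [hε, Finset.lt_inf'_iff]
    exact fun k _ => hepos k
  have hεle : ∀ k : X × Fin m, ε ≤ e k := fun k => Finset.inf'_le e (Finset.mem_univ k)
  have hεleD : ε ≤ (1-γ)*D/2 := by
    obtain ⟨k⟩ := (inferInstance : Nonempty (X × Fin m))
    refine le_trans (hεle k) ?_
    rw [he]; dsimp only
    split_ifs with h
    · exact le_rfl
    · exact min_le_left _ _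
  have hεD : ε ≤ (1-γ)*D := by nlinarith
  have hεltD : ε < D := by nlinarith
  -- the box
  set l : X → Fin m → ℝ := fun x i =>
    if ϑ x i - θh x i = D then θh x i + (1-γ)*ε else θh x i - ε with hl
  set u : X → Fin m → ℝ := fun x i =>
    if ϑ x i - θh x i = -D then θh x i - (1-γ)*ε else θh x i + ε with hu
  have hnotboth : ∀ x i, ¬(ϑ x i - θh x i = D ∧ ϑ x i - θh x i = -D) := by
    rintro x i ⟨h1, h2⟩; rw [h1] at h2; linarith
  have hlu : ∀ x i, l x i ≤ u x i := by
    intro x i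
    rw [hl, hu]; dsimp only
    split_ifs with h1 h2 h2
    · exact absurd ⟨h1, h2⟩ (hnotboth x i)
    · nlinarith
    · nlinarith
    · nlinarith
  have hboxε : ∀ (θ0 : X → Fin m → ℝ), (∀ x i, l x i ≤ θ0 x i ∧ θ0 x i ≤ u x i) →
      ∀ x i, |θ0 x i - θh x i| ≤ ε := by
    intro θ0 h0 x i
    obtain ⟨ha, hb⟩ := h0 x i
    rw [hl] at ha; rw [hu] at hb; dsimp only at ha hb
    rw [abs_le]
    constructor
    · split_ifs at ha with h1
      · nlinarith
      · linarith
    · split_ifs at hb with h1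
      · nlinarith
      · linarith
  -- the operator
  set U : (X → Fin m → ℝ) → (X → Fin m → ℝ) := fun θ x i =>
    max (l x i) (min (u x i)
      (max (invCDF (bellman P γ (paramDist θ) x) (qlevel m i))
        (min (θ x i) (upInvCDF (bellman P γ (paramDist θ) x) (qlevel m i))))) with hU
  have hUmono : ∀ θ θ', (∀ x i, θ x i ≤ θ' x i) → ∀ x i, U θ x i ≤ U θ' x i := by
    intro θ θ' hord x i
    haveI := bellman_isProb P hP γ hm θ x
    haveI := bellman_isProb P hP γ hm θ' x
    have hcdf : ∀ z, cdf (bellman P γ (paramDist θ') x) z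
        ≤ cdf (bellman P γ (paramDist θ) x) z := fun z =>
      bellman_cdf_mono P hP hγ0 hm θ θ' hord x z
    have hq : invCDF (bellman P γ (paramDist θ) x) (qlevel m i)
        ≤ invCDF (bellman P γ (paramDist θ') x) (qlevel m i) :=
      invCDF_mono_meas (qlevel_pos hm i) (qlevel_lt_one hm i) hcdf
    have hqb : upInvCDF (bellman P γ (paramDist θ) x) (qlevel m i)
        ≤ upInvCDF (bellman P γ (paramDist θ') x) (qlevel m i) :=
      upInvCDF_mono_meas (qlevel_pos hm i) (qlevel_lt_one hm i) hcdf
    rw [hU]; dsimp only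
    exact max_le_max le_rfl (min_le_min le_rfl (max_le_max hq (min_le_min (hord x i) hqb)))
  have hUbox : ∀ θ, (∀ x i, l x i ≤ θ x i ∧ θ x i ≤ u x i) →
      ∀ x i, l x i ≤ U θ x i ∧ U θ x i ≤ u x i := by
    intro θ _ x i
    rw [hU]; dsimp only
    exact ⟨le_max_left _ _, max_le (hlu x i) (min_le_left _ _)⟩
  obtain ⟨θ', hθ'box, hθ'fix⟩ := tarski_box l u hlu U hUmono hUbox
  have hθ'ε : ∀ x i, |θ' x i - θh x i| ≤ ε := hboxε θ' hθ'box
  -- key CDF facts for θ'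
  haveI : ∀ x, IsProbabilityMeasure (bellman P γ (paramDist θ') x) :=
    fun x => bellman_isProb P hP γ hm θ' x
  have hswlo : ∀ x (z : ℝ), cdf (bellman P γ (paramDist θh) x) z
      ≤ cdf (bellman P γ (paramDist θ') x) (z + γ * ε) := fun x z =>
    bellman_cdf_sandw P hP hγ0 hm θ' θh (fun x i => by
      rw [abs_sub_comm]; exact hθ'ε x i) x z
  have hswhi : ∀ x (z : ℝ), cdf (bellman P γ (paramDist θ') x) z
      ≤ cdf (bellman P γ (paramDist θh) x) (z + γ * ε) := fun x z =>
    bellman_cdf_sandw P hP hγ0 hm θh θ' (fun x i => hθ'ε x i) x z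
  have hiiQ : ∀ x i, invCDF (bellman P γ (paramDist θ') x) (qlevel m i) ≤ u x i := by
    intro x i
    refine invCDF_le (qlevel_pos hm i) ?_
    rw [hu]; dsimp only
    split_ifs with h1
    · -- u = θh - (1-γ)ε, coordinate frozen at -D
      have h2 := hsm x i h1
      have h3 : θh x i - (1-γ)*ε - γ * ε + γ * ε = θh x i - (1-γ)*ε := by ring
      have h4 := hswlo x (θh x i - (1-γ)*ε - γ * ε)
      rw [h3] at h4
      refine le_trans (le_trans h2 ((cdf _).mono ?_)) h4
      nlinarith
    · have h3 : θh x i + ε - γ * ε + γ * ε = θh x i + ε := by ring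
      have h4 := hswlo x (θh x i + ε - γ * ε)
      rw [h3] at h4
      refine le_trans (le_trans (hband x i).1 ((cdf _).mono ?_)) h4
      nlinarith
  have hiQ : ∀ x i, l x i ≤ upInvCDF (bellman P γ (paramDist θ') x) (qlevel m i) := by
    intro x i
    refine le_upInvCDF (qlevel_lt_one hm i) ?_
    intro y hy
    refine le_trans (hswhi x y) ?_
    rw [hl] at hy; dsimp only at hy
    split_ifs at hy with h1
    · exact hsp x i h1 _ (by nlinarith)
    · exact (hband x i).2 _ (by nlinarith)
  -- θ' is in its own band
  have hbandθ' : Band P γ θ' := by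
    intro x i
    have hq := hiiQ x i
    have hqb := hiQ x i
    have hqqb : invCDF (bellman P γ (paramDist θ') x) (qlevel m i)
        ≤ upInvCDF (bellman P γ (paramDist θ') x) (qlevel m i) :=
      invCDF_le_upInvCDF (qlevel_pos hm i) (qlevel_lt_one hm i)
    have hfixpt : θ' x i = max (l x i) (min (u x i)
        (max (invCDF (bellman P γ (paramDist θ') x) (qlevel m i))
          (min (θ' x i) (upInvCDF (bellman P γ (paramDist θ') x) (qlevel m i))))) :=
      (congrFun (congrFun hθ'fix x) i).symm
    set q := invCDF (bellman P γ (paramDist θ') x) (qlevel m i)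
    set qb := upInvCDF (bellman P γ (paramDist θ') x) (qlevel m i)
    set w := max q (min (θ' x i) qb) with hw
    have hlw : l x i ≤ w := le_trans (le_min (hθ'box x i).1 hqb) (le_max_right _ _)
    have hwu : w ≤ u x i := max_le hq (le_trans (min_le_left _ _) (hθ'box x i).2)
    have hfix2 : θ' x i = w := by
      rw [hfixpt, min_eq_right hwu, max_eq_right hlw]
    have hqθ : q ≤ θ' x i := by rw [hfix2, hw]; exact le_max_left _ _
    have hθqb : θ' x i ≤ qb := by
      rw [hfix2, hw]
      exact max_le hqqb (min_le_right _ _)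
    constructor
    · exact le_trans (cdf_invCDF (qlevel_pos hm i) (qlevel_lt_one hm i)) ((cdf _).mono hqθ)
    · intro y hy
      exact cdf_le_of_lt_upInvCDF (qlevel_pos hm i) (lt_of_lt_of_le hy hθqb)
  -- distance estimates
  refine ⟨θ', (1-γ)*ε, by nlinarith, hbandθ', ?_⟩
  intro x i
  obtain ⟨hbl, hbu⟩ := hθ'box x i
  rw [hl] at hbl; rw [hu] at hbu; dsimp only at hbl hbu
  by_cases h1 : ϑ x i - θh x i = D
  · rw [if_pos h1] at hbl
    rw [if_neg (fun h2 => hnotboth x i ⟨h1, h2⟩)] at hbu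
    rw [abs_le]
    constructor <;> nlinarith
  · by_cases h2 : ϑ x i - θh x i = -D
    · rw [if_neg h1] at hbl
      rw [if_pos h2] at hbu
      rw [abs_le]
      constructor <;> nlinarith
    · rw [if_neg h1] at hbl
      rw [if_neg h2] at hbu
      have hek : ε ≤ (D - |ϑ x i - θh x i|)/2 := by
        refine le_trans (hεle (x, i)) ?_
        rw [he]; dsimp only
        rw [if_neg ?_]
        · exact min_le_right _ _
        · intro hcon
          rcases abs_eq (le_of_lt hD) |>.1 hcon with h | h
          · exact h1 h
          · exact h2 h
      have habs := abs_le.1 (hdist x i)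
      have hb2 : |ϑ x i - θh x i| ≤ D - 2*ε := by linarith
      have habs2 := abs_le.1 hb2
      have hεγ : (1-γ)*ε ≤ ε := by nlinarith
      rw [abs_le]
      constructor <;> linarith

end PhaseD

section PhaseE


/-- No-upcrossing: an absolutely continuous path whose velocity is a.e. nonpositive
whenever the path exceeds `M` cannot end above `max` of its start and `M`. -/
lemma noup {f φ : ℝ → ℝ} {u1 u2 M : ℝ} (h12 : u1 ≤ u2)
    (hcont : ContinuousOn f (Icc u1 u2))
    (hint : ∀ v1 v2, u1 ≤ v1 → v1 ≤ v2 → v2 ≤ u2 →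
      IntegrableOn φ (Ioc v1 v2) ∧ f v2 - f v1 = ∫ s in Ioc v1 v2, φ s)
    (hM1 : f u1 ≤ M)
    (hdrift : ∀ᵐ v ∂(MeasureTheory.volume.restrict (Ioc u1 u2)), M < f v → φ v ≤ 0) :
    f u2 ≤ M := by
  by_contra hc
  push_neg at hc
  set A := {v ∈ Icc u1 u2 | f v ≤ M} with hA
  have hu1A : u1 ∈ A := ⟨⟨le_rfl, h12⟩, hM1⟩
  have hAne : A.Nonempty := ⟨u1, hu1A⟩
  have hAbdd : BddAbove A := ⟨u2, fun v hv => hv.1.2⟩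
  have hAclosed : IsClosed A := by
    have : A = Icc u1 u2 ∩ f ⁻¹' (Iic M) := by
      ext v; simp [hA, and_comm]
    rw [this]
    exact hcont.preimage_isClosed_of_isClosed isClosed_Icc isClosed_Iic
  set v' := sSup A with hv'
  have hv'A : v' ∈ A := hAclosed.csSup_mem hAne hAbdd
  have hv'le : v' ≤ u2 := hv'A.1.2
  have hv'lt : v' < u2 := by
    rcases lt_or_eq_of_le hv'le with h | h
    · exact h
    · exfalso; rw [h] at hv'A; exact absurd hv'A.2 (not_le.2 hc)
  have hgt : ∀ v ∈ Ioc v' u2, M < f v := by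
    intro v hv
    by_contra hle
    push_neg at hle
    have : v ∈ A := ⟨⟨le_trans hv'A.1.1 hv.1.le, hv.2⟩, hle⟩
    exact absurd (le_csSup hAbdd this) (not_le.2 hv.1)
  obtain ⟨hintR, hdiff⟩ := hint v' u2 hv'A.1.1 hv'le le_rfl
  have hφneg : ∫ s in Ioc v' u2, φ s ≤ 0 := by
    refine integral_nonpos_of_ae ?_
    have h1 : ∀ᵐ v ∂(MeasureTheory.volume.restrict (Ioc v' u2)), M < f v → φ v ≤ 0 :=
      ae_restrict_of_ae_restrict_of_subset (Ioc_subset_Ioc_left hv'A.1.1) hdrift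
    have h2 : ∀ᵐ v ∂(MeasureTheory.volume.restrict (Ioc v' u2)), v ∈ Ioc v' u2 :=
      ae_restrict_mem measurableSet_Ioc
    filter_upwards [h1, h2] with v hv1 hv2
    exact hv1 (hgt v hv2)
  have : f u2 ≤ f v' := by linarith
  exact absurd (le_trans this hv'A.2) (not_le.2 hc)

/-- Attainment of the (finite) double supremum. -/
lemma sup_attained {X : Type*} [Fintype X] [Nonempty X] {m : ℕ} [NeZero m]
    (f : X → Fin m → ℝ) :
    ∃ x i, (⨆ x, ⨆ i, f x i) = f x i ∧ ∀ x' i', f x' i' ≤ f x i := by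
  haveI : Nonempty (Fin m) := Fin.pos_iff_nonempty.mp (Nat.pos_of_ne_zero (NeZero.ne m))
  obtain ⟨k, hk⟩ := Finite.exists_max (fun k : X × Fin m => f k.1 k.2)
  refine ⟨k.1, k.2, le_antisymm ?_ ?_, fun x' i' => hk (x', i')⟩
  · exact ciSup_le fun x => ciSup_le fun i => hk (x, i)
  · calc f k.1 k.2 ≤ ⨆ i, f k.1 i :=
        le_ciSup (Set.Finite.bddAbove (Set.finite_range _)) k.2
      _ ≤ ⨆ x, ⨆ i, f x i :=
        le_ciSup (Set.Finite.bddAbove (Set.finite_range (fun x => ⨆ i, f x i))) k.1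

/-- The double sup of coordinatewise |differences| is the sup-metric distance. -/
lemma sup_eq_dist {X : Type*} [Fintype X] [Nonempty X] {m : ℕ} [NeZero m]
    (θ θ' : X → Fin m → ℝ) :
    (⨆ x, ⨆ i, |θ x i - θ' x i|) = dist θ θ' := by
  haveI : Nonempty (Fin m) := Fin.pos_iff_nonempty.mp (Nat.pos_of_ne_zero (NeZero.ne m))
  refine le_antisymm ?_ ?_
  · refine ciSup_le fun x => ciSup_le fun i => ?_
    have h1 := dist_le_pi_dist θ θ' x
    have h2 := dist_le_pi_dist (θ x) (θ' x) i
    rw [Real.dist_eq] at h2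
    linarith
  · rw [dist_pi_le_iff (Real.iSup_nonneg fun x => Real.iSup_nonneg fun i => abs_nonneg _)]
    intro x
    rw [dist_pi_le_iff (Real.iSup_nonneg fun x => Real.iSup_nonneg fun i => abs_nonneg _)]
    intro i
    rw [Real.dist_eq]
    calc |θ x i - θ' x i| ≤ ⨆ i, |θ x i - θ' x i| :=
        le_ciSup (Set.Finite.bddAbove (Set.finite_range (fun i => |θ x i - θ' x i|))) i
      _ ≤ ⨆ x, ⨆ i, |θ x i - θ' x i| :=
        le_ciSup (Set.Finite.bddAbove (Set.finite_range (fun x => ⨆ i, |θ x i - θ' x i|))) x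


end PhaseE

end QTDAux

/-- Lyapunov function for the QTD differential inclusion:
`L(θ) = min_{λ ∈ [0,1]^{X×[m]}} ‖θ − θ̂^π_λ‖_∞` is continuous, nonnegative, vanishes exactly on
the set `Λ` of QDP fixed points, and strictly decreases along any solution of the QTD
differential inclusion started outside `Λ`. -/
theorem qtd_di_lyapunov
    {X : Type*} [Fintype X] [Nonempty X] [MeasurableSpace X] [MeasurableSingletonClass X]
    (P : X → Measure (ℝ × X)) (hP : ∀ x, IsProbabilityMeasure (P x))
    (hPmean : ∀ x, Integrable (fun p : ℝ × X => p.1) (P x))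
    (γ : ℝ) (hγ0 : 0 ≤ γ) (hγ1 : γ < 1) {m : ℕ} (hm : 0 < m)
    (θhat : (X → Fin m → ℝ) → X → Fin m → ℝ)
    (hθhat : ∀ lam ∈ unitCube X m,
      projBellmanParam P γ lam (θhat lam) = θhat lam)
    (hθhatUnique : ∀ lam ∈ unitCube X m, ∀ θ : X → Fin m → ℝ,
      projBellmanParam P γ lam θ = θ → θ = θhat lam)
    (Λ : Set (X → Fin m → ℝ))
    (hΛ : Λ = {θ | ∃ lam ∈ unitCube X m, θ = θhat lam})
    (L : (X → Fin m → ℝ) → ℝ)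
    (hL : ∀ θ, L θ = sInf {r : ℝ | ∃ lam ∈ unitCube X m,
        r = ⨆ x : X, ⨆ i : Fin m, |θ x i - θhat lam x i|}) :
    Continuous L ∧ (∀ θ, 0 ≤ L θ) ∧ (∀ θ, L θ = 0 ↔ θ ∈ Λ) ∧
    ∀ (ϑ g : ℝ → X → Fin m → ℝ),
      (∀ t : ℝ, 0 ≤ t → ∀ x i,
        MeasureTheory.IntegrableOn (fun s => g s x i) (Set.Icc (0:ℝ) t)) →
      (∀ t : ℝ, 0 ≤ t → ∀ x i,
        ϑ t x i = ϑ 0 x i + ∫ s in Set.Ioc (0:ℝ) t, g s x i) →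
      (∀ᵐ s ∂(MeasureTheory.volume.restrict (Set.Ici (0:ℝ))), ∀ x i,
        g s x i ∈ Set.Icc
          (qlevel m i - cdf (bellman P γ (paramDist (ϑ s)) x) (ϑ s x i))
          (qlevel m i - Function.leftLim
            (fun t => cdf (bellman P γ (paramDist (ϑ s)) x) t) (ϑ s x i))) →
      ∀ s t : ℝ, 0 ≤ s → s < t → ϑ s ∉ Λ → L (ϑ t) < L (ϑ s) := by
  classical
  haveI : Nonempty (Fin m) := Fin.pos_iff_nonempty.mp hm
  haveI : NeZero m := ⟨hm.ne'⟩
  have hcube0 : (fun (_ : X) (_ : Fin m) => (0:ℝ)) ∈ unitCube X m :=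
    fun x i => ⟨le_refl _, zero_le_one⟩
  have hmem : ∀ (θ : X → Fin m → ℝ) (lam : X → Fin m → ℝ), lam ∈ unitCube X m →
      (⨆ x : X, ⨆ i : Fin m, |θ x i - θhat lam x i|) ∈
        {r : ℝ | ∃ lam ∈ unitCube X m,
          r = ⨆ x : X, ⨆ i : Fin m, |θ x i - θhat lam x i|} :=
    fun θ lam hlam => ⟨lam, hlam, rfl⟩
  have hel : ∀ (θ : X → Fin m → ℝ) (r : ℝ),
      r ∈ {r : ℝ | ∃ lam ∈ unitCube X m,
        r = ⨆ x : X, ⨆ i : Fin m, |θ x i - θhat lam x i|} → 0 ≤ r := by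
    rintro θ r ⟨lam, -, rfl⟩
    exact Real.iSup_nonneg fun x => Real.iSup_nonneg fun i => abs_nonneg _
  have hne : ∀ θ : X → Fin m → ℝ,
      Set.Nonempty {r : ℝ | ∃ lam ∈ unitCube X m,
        r = ⨆ x : X, ⨆ i : Fin m, |θ x i - θhat lam x i|} :=
    fun θ => ⟨_, hmem θ _ hcube0⟩
  have hbdd : ∀ θ : X → Fin m → ℝ,
      BddBelow {r : ℝ | ∃ lam ∈ unitCube X m,
        r = ⨆ x : X, ⨆ i : Fin m, |θ x i - θhat lam x i|} :=
    fun θ => ⟨0, fun r hr => hel θ r hr⟩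
  have hnonneg : ∀ θ, 0 ≤ L θ := by
    intro θ
    rw [hL θ]
    exact Real.sInf_nonneg (hel θ)
  have hcoorddist : ∀ (a b : X → Fin m → ℝ) (x : X) (i : Fin m),
      |a x i - b x i| ≤ dist a b := by
    intro a b x i
    have h1 := dist_le_pi_dist a b x
    have h2 := dist_le_pi_dist (a x) (b x) i
    rw [Real.dist_eq] at h2
    linarith
  have hsup_le : ∀ (θ θ' : X → Fin m → ℝ) (lam : X → Fin m → ℝ),
      (⨆ x : X, ⨆ i : Fin m, |θ x i - θhat lam x i|) ≤
      (⨆ x : X, ⨆ i : Fin m, |θ' x i - θhat lam x i|) + dist θ θ' := by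
    intro θ θ' lam
    refine ciSup_le fun x => ciSup_le fun i => ?_
    have h1 : |θ' x i - θhat lam x i| ≤ ⨆ x : X, ⨆ i : Fin m, |θ' x i - θhat lam x i| := by
      rw [QTDAux.sup_eq_dist]
      exact hcoorddist θ' (θhat lam) x i
    have h2 : |θ x i - θ' x i| ≤ dist θ θ' := hcoorddist θ θ' x i
    calc |θ x i - θhat lam x i|
        = |(θ x i - θ' x i) + (θ' x i - θhat lam x i)| := by ring_nf
      _ ≤ |θ x i - θ' x i| + |θ' x i - θhat lam x i| := abs_add_le _ _
      _ ≤ dist θ θ' + (⨆ x : X, ⨆ i : Fin m, |θ' x i - θhat lam x i|) := add_le_add h2 h1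
      _ = _ := add_comm _ _
  have hkey : ∀ θ θ' : X → Fin m → ℝ, L θ ≤ L θ' + dist θ θ' := by
    intro θ θ'
    rw [hL θ, hL θ', ← sub_le_iff_le_add]
    refine le_csInf (hne θ') ?_
    rintro b ⟨lam, hlam, rfl⟩
    rw [sub_le_iff_le_add]
    calc sInf {r : ℝ | ∃ lam ∈ unitCube X m,
          r = ⨆ x : X, ⨆ i : Fin m, |θ x i - θhat lam x i|}
        ≤ ⨆ x : X, ⨆ i : Fin m, |θ x i - θhat lam x i| := csInf_le (hbdd θ) (hmem θ lam hlam)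
      _ ≤ _ := hsup_le θ θ' lam
  have hlip : LipschitzWith 1 L := by
    refine LipschitzWith.of_dist_le_mul fun θ θ' => ?_
    rw [NNReal.coe_one, one_mul, Real.dist_eq, abs_sub_le_iff]
    constructor
    · linarith [hkey θ θ']
    · have h := hkey θ' θ
      rw [dist_comm] at h
      linarith
  -- Λ is exactly the set of band parameters
  have hΛband : ∀ θ0 : X → Fin m → ℝ, θ0 ∈ Λ ↔ QTDAux.Band P γ θ0 := by
    intro θ0
    constructor
    · intro h0
      rw [hΛ] at h0
      obtain ⟨lam, hlam, rfl⟩ := h0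
      exact QTDAux.band_of_fix P hP γ hm lam _ (fun x i => hlam x i) (hθhat lam hlam)
    · intro h0
      obtain ⟨lam, hlam, hfix⟩ := QTDAux.band_to_fix P hP γ hm θ0 h0
      rw [hΛ]
      exact ⟨lam, fun x i => hlam x i, (hθhatUnique lam (fun x i => hlam x i) θ0 hfix)⟩
  have happrox : ∀ θ0 : X → Fin m → ℝ,
      (∀ ε : ℝ, 0 < ε → ∃ θ'' ∈ Λ, ∀ x i, |θ0 x i - θ'' x i| ≤ ε) → θ0 ∈ Λ := by
    intro θ0 h
    rw [hΛband]
    refine QTDAux.band_approx P hP hγ0 hm θ0 fun ε hε => ?_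
    obtain ⟨θ'', hθ''Λ, hclose⟩ := h ε hε
    exact ⟨θ'', (hΛband θ'').1 hθ''Λ, hclose⟩
  have hzero : ∀ θ, L θ = 0 ↔ θ ∈ Λ := by
    intro θ
    constructor
    · intro h0
      refine happrox θ fun ε hε => ?_
      have hlt : sInf {r : ℝ | ∃ lam ∈ unitCube X m,
          r = ⨆ x : X, ⨆ i : Fin m, |θ x i - θhat lam x i|} < ε := by
        rw [← hL θ, h0]; exact hε
      obtain ⟨r, hrS, hrε⟩ := exists_lt_of_csInf_lt (hne θ) hlt
      obtain ⟨lam, hlam, rfl⟩ := hrS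
      refine ⟨θhat lam, hΛ ▸ ⟨lam, hlam, rfl⟩, fun x i => ?_⟩
      have h1 : |θ x i - θhat lam x i| ≤ ⨆ x : X, ⨆ i : Fin m, |θ x i - θhat lam x i| := by
        rw [QTDAux.sup_eq_dist]
        exact hcoorddist θ (θhat lam) x i
      linarith
    · intro hθ
      rw [hΛ] at hθ
      obtain ⟨lam, hlam, rfl⟩ := hθ
      refine le_antisymm ?_ (hnonneg _)
      rw [hL]
      have hzero' : (⨆ x : X, ⨆ i : Fin m, |θhat lam x i - θhat lam x i|) = 0 := by
        simp [sub_self, abs_zero, ciSup_const]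
      calc sInf {r : ℝ | ∃ lam' ∈ unitCube X m,
            r = ⨆ x : X, ⨆ i : Fin m, |θhat lam x i - θhat lam' x i|}
          ≤ ⨆ x : X, ⨆ i : Fin m, |θhat lam x i - θhat lam x i| :=
            csInf_le (hbdd _) (hmem _ lam hlam)
        _ = 0 := hzero'
  refine ⟨hlip.continuous, hnonneg, hzero, ?_⟩
  -- ===================== Part 4: strict decrease =====================
  intro ϑ g hgint hϑeq hDI s t hs hst hnotΛ
  set D := L (ϑ s) with hDdef
  have hD : 0 < D := by
    rcases lt_or_eq_of_le (hnonneg (ϑ s)) with h | h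
    · exact h
    · exact absurd ((hzero (ϑ s)).1 h.symm) hnotΛ
  -- basic path facts
  have hdiff : ∀ (x : X) (i : Fin m) (v1 v2 : ℝ), 0 ≤ v1 → v1 ≤ v2 →
      ϑ v2 x i - ϑ v1 x i = ∫ u in Set.Ioc v1 v2, g u x i := by
    intro x i v1 v2 h1 h12
    have e1 := hϑeq v1 h1 x i
    have e2 := hϑeq v2 (le_trans h1 h12) x i
    have hint1 : MeasureTheory.IntegrableOn (fun u => g u x i) (Set.Ioc 0 v1) :=
      (hgint v1 h1 x i).mono_set Set.Ioc_subset_Icc_self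
    have hint2 : MeasureTheory.IntegrableOn (fun u => g u x i) (Set.Ioc v1 v2) :=
      (hgint v2 (le_trans h1 h12) x i).mono_set (fun y hy => ⟨le_trans h1 hy.1.le, hy.2⟩)
    have hsplit : ∫ u in Set.Ioc 0 v2, g u x i
        = (∫ u in Set.Ioc 0 v1, g u x i) + ∫ u in Set.Ioc v1 v2, g u x i := by
      rw [← Set.Ioc_union_Ioc_eq_Ioc h1 h12]
      exact MeasureTheory.setIntegral_union (Set.Ioc_disjoint_Ioc_of_le le_rfl)
        measurableSet_Ioc hint1 hint2
    rw [e1, e2, hsplit]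
    ring
  have hgbound : ∀ᵐ v ∂(MeasureTheory.volume.restrict (Set.Ici (0:ℝ))),
      ∀ x i, |g v x i| ≤ 1 := by
    filter_upwards [hDI] with v hv x i
    haveI := QTDAux.bellman_isProb P hP γ hm (ϑ v) x
    obtain ⟨h1, h2⟩ := Set.mem_Icc.mp (hv x i)
    have hτ0 := QTDAux.qlevel_pos hm i
    have hτ1 := QTDAux.qlevel_lt_one hm i
    have hF1 : cdf (bellman P γ (paramDist (ϑ v)) x) (ϑ v x i) ≤ 1 := cdf_le_one _ _
    have hF0 : 0 ≤ cdf (bellman P γ (paramDist (ϑ v)) x) (ϑ v x i - 1) := cdf_nonneg _ _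
    have hFL : 0 ≤ Function.leftLim
        (fun z => cdf (bellman P γ (paramDist (ϑ v)) x) z) (ϑ v x i) := by
      refine le_trans hF0 (Monotone.le_leftLim ((cdf _).mono) ?_)
      exact sub_one_lt _
    rw [abs_le]
    constructor <;> linarith
  have hLip : ∀ (x : X) (i : Fin m) (v1 v2 : ℝ), 0 ≤ v1 → v1 ≤ v2 →
      |ϑ v2 x i - ϑ v1 x i| ≤ v2 - v1 := by
    intro x i v1 v2 h1 h12
    rw [hdiff x i v1 v2 h1 h12]
    have hb : ∀ᵐ u ∂(MeasureTheory.volume.restrict (Set.Ioc v1 v2)), ‖g u x i‖ ≤ 1 := by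
      have hss : Set.Ioc v1 v2 ⊆ Set.Ici (0:ℝ) := fun y hy => le_trans h1 hy.1.le
      filter_upwards [MeasureTheory.ae_restrict_of_ae_restrict_of_subset hss hgbound] with u hu
      rw [Real.norm_eq_abs]
      exact hu x i
    have h := MeasureTheory.norm_setIntegral_le_of_norm_le_const_ae
      (μ := MeasureTheory.volume) (s := Set.Ioc v1 v2)
      (f := fun u => g u x i) (C := 1)
      (by rw [Real.volume_Ioc]; exact ENNReal.ofReal_lt_top) hb
    rw [Real.norm_eq_abs, Real.volume_real_Ioc_of_le h12,
      one_mul] at h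
    exact h
  have hcont : ∀ (x : X) (i : Fin m), ContinuousOn (fun v => ϑ v x i) (Set.Ici 0) := by
    intro x i
    rw [Metric.continuousOn_iff]
    intro v hv ε hε
    refine ⟨ε, hε, fun v' hv' hd => ?_⟩
    rw [Real.dist_eq] at hd ⊢
    rcases le_total v' v with h | h
    · have hL1 := hLip x i v' v hv' h
      rw [abs_sub_comm]
      calc |ϑ v x i - ϑ v' x i| ≤ v - v' := hL1
        _ ≤ |v' - v| := by rw [abs_sub_comm]; exact le_abs_self _
        _ < ε := hd
    · have hL1 := hLip x i v v' hv h
      calc |ϑ v' x i - ϑ v x i| ≤ v' - v := hL1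
        _ ≤ |v' - v| := le_abs_self _
        _ < ε := hd
  have hdistcont : ∀ θ0 : X → Fin m → ℝ,
      ContinuousOn (fun v => dist (ϑ v) θ0) (Set.Ici 0) := by
    intro θ0
    have hϑc : ContinuousOn (fun v => ϑ v) (Set.Ici (0:ℝ)) := by
      rw [continuousOn_pi]
      intro x
      rw [continuousOn_pi]
      intro i
      exact hcont x i
    exact (continuous_id.dist continuous_const).comp_continuousOn hϑc
  -- the drift lemma
  have hdrift : ∀ lam, lam ∈ unitCube X m →
      ∀ᵐ v ∂(MeasureTheory.volume.restrict (Set.Ici (0:ℝ))), ∀ x i,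
      (γ * dist (ϑ v) (θhat lam) < ϑ v x i - θhat lam x i → g v x i ≤ 0) ∧
      (ϑ v x i - θhat lam x i < -(γ * dist (ϑ v) (θhat lam)) → 0 ≤ g v x i) := by
    intro lam hlam
    have hband : QTDAux.Band P γ (θhat lam) :=
      (hΛband (θhat lam)).1 (hΛ ▸ ⟨lam, hlam, rfl⟩)
    filter_upwards [hDI] with v hv x i
    have hcoord : ∀ x' i', |θhat lam x' i' - ϑ v x' i'| ≤ dist (ϑ v) (θhat lam) := by
      intro x' i'
      rw [abs_sub_comm]
      exact hcoorddist (ϑ v) (θhat lam) x' i'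
    haveI := QTDAux.bellman_isProb P hP γ hm (ϑ v) x
    haveI := QTDAux.bellman_isProb P hP γ hm (θhat lam) x
    obtain ⟨hvlo, hvhi⟩ := Set.mem_Icc.mp (hv x i)
    set c := dist (ϑ v) (θhat lam) with hc
    constructor
    · intro hgt
      set y := (θhat lam x i + γ * c + ϑ v x i)/2 with hy
      have hy1 : θhat lam x i + γ * c < y := by rw [hy]; linarith
      have hy2 : y < ϑ v x i := by rw [hy]; linarith
      have hs1 : cdf (bellman P γ (paramDist (θhat lam)) x) (y - γ * c)
          ≤ cdf (bellman P γ (paramDist (ϑ v)) x) (y - γ * c + γ * c) :=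
        QTDAux.bellman_cdf_sandw P hP hγ0 hm (ϑ v) (θhat lam) hcoord x _
      have hyy : y - γ * c + γ * c = y := by ring
      rw [hyy] at hs1
      have hτy : qlevel m i ≤ cdf (bellman P γ (paramDist (ϑ v)) x) y :=
        le_trans (le_trans (hband x i).1
          ((cdf _).mono (by linarith : θhat lam x i ≤ y - γ * c))) hs1
      have hll : cdf (bellman P γ (paramDist (ϑ v)) x) y
          ≤ Function.leftLim (fun z => cdf (bellman P γ (paramDist (ϑ v)) x) z) (ϑ v x i) :=
        Monotone.le_leftLim ((cdf _).mono) hy2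
      linarith
    · intro hlt
      have hcoord2 : ∀ x' i', |ϑ v x' i' - θhat lam x' i'| ≤ c :=
        fun x' i' => hcoorddist (ϑ v) (θhat lam) x' i'
      have hs1 : cdf (bellman P γ (paramDist (ϑ v)) x) (ϑ v x i)
          ≤ cdf (bellman P γ (paramDist (θhat lam)) x) (ϑ v x i + γ * c) :=
        QTDAux.bellman_cdf_sandw P hP hγ0 hm (θhat lam) (ϑ v) hcoord2 x _
      have hτ : cdf (bellman P γ (paramDist (θhat lam)) x) (ϑ v x i + γ * c) ≤ qlevel m i :=
        (hband x i).2 _ (by linarith)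
      linarith
  -- monotone decrease of distances to fixed points
  have hmono : ∀ lam, lam ∈ unitCube X m → ∀ u1 u2 : ℝ, 0 ≤ u1 → u1 ≤ u2 →
      dist (ϑ u2) (θhat lam) ≤ dist (ϑ u1) (θhat lam) := by
    intro lam hlam u1 u2 hu1 hu12
    by_contra hcon
    push_neg at hcon
    obtain ⟨uh, huhmem, huhmax⟩ := isCompact_Icc.exists_isMaxOn (Set.nonempty_Icc.2 hu12)
      ((hdistcont (θhat lam)).mono (fun y (hy : y ∈ Set.Icc u1 u2) => le_trans hu1 hy.1))
    set C := dist (ϑ uh) (θhat lam) with hC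
    have hmax : ∀ v ∈ Set.Icc u1 u2, dist (ϑ v) (θhat lam) ≤ C := fun v hv => huhmax hv
    have hCu2 : dist (ϑ u2) (θhat lam) ≤ C := hmax u2 ⟨hu12, le_rfl⟩
    have hCpos : 0 < C := lt_of_le_of_lt dist_nonneg (lt_of_lt_of_le hcon hCu2)
    obtain ⟨x, i, hxi, hxi2⟩ := QTDAux.sup_attained (fun x i => |ϑ uh x i - θhat lam x i|)
    rw [QTDAux.sup_eq_dist] at hxi
    have hco : |ϑ uh x i - θhat lam x i| = C := hxi.symm
    have hbC : max (γ * C) (dist (ϑ u1) (θhat lam)) < C :=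
      max_lt (by nlinarith) (lt_of_lt_of_le hcon hCu2)
    set b := max (γ * C) (dist (ϑ u1) (θhat lam)) with hbdef
    have hsubIci : Set.Ioc u1 uh ⊆ Set.Ici (0:ℝ) := fun y hy => le_trans hu1 hy.1.le
    have hdriftr := MeasureTheory.ae_restrict_of_ae_restrict_of_subset hsubIci (hdrift lam hlam)
    have hmemae := MeasureTheory.ae_restrict_mem (μ := MeasureTheory.volume)
      (s := Set.Ioc u1 uh) measurableSet_Ioc
    rcases abs_cases (ϑ uh x i - θhat lam x i) with ⟨habs, _⟩ | ⟨habs, _⟩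
    · -- positive side
      have hfC : ϑ uh x i - θhat lam x i = C := by rw [← hco]; exact habs.symm
      have hnoup := QTDAux.noup (f := fun v => ϑ v x i - θhat lam x i)
        (φ := fun v => g v x i) (u1 := u1) (u2 := uh) (M := b) huhmem.1
        (((hcont x i).mono (fun y (hy : y ∈ Set.Icc u1 uh) =>
          le_trans hu1 hy.1)).sub continuousOn_const)
        (fun v1 v2 h1 h2 h3 => ⟨(hgint v2 (le_trans (le_trans hu1 h1) h2) x i).mono_set
            (fun y hy => ⟨le_trans (le_trans hu1 h1) hy.1.le, hy.2⟩),
          by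
            have hd := hdiff x i v1 v2 (le_trans hu1 h1) h2
            linarith⟩)
        (le_trans (le_abs_self _) (le_trans (hcoorddist (ϑ u1) (θhat lam) x i)
          (le_max_right _ _)))
        (by
          filter_upwards [hdriftr, hmemae] with v hv hvmem hMf
          have hvIcc : v ∈ Set.Icc u1 u2 := ⟨hvmem.1.le, le_trans hvmem.2 huhmem.2⟩
          have hcv : dist (ϑ v) (θhat lam) ≤ C := hmax v hvIcc
          refine (hv x i).1 ?_
          have : γ * dist (ϑ v) (θhat lam) ≤ γ * C := mul_le_mul_of_nonneg_left hcv hγ0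
          have hbb : γ * C ≤ b := le_max_left _ _
          linarith)
      have hnoup' : ϑ uh x i - θhat lam x i ≤ b := hnoup
      linarith
    · -- negative side
      have hfC : θhat lam x i - ϑ uh x i = C := by rw [← hco, habs]; ring
      have hnoup := QTDAux.noup (f := fun v => θhat lam x i - ϑ v x i)
        (φ := fun v => -(g v x i)) (u1 := u1) (u2 := uh) (M := b) huhmem.1
        (continuousOn_const.sub ((hcont x i).mono (fun y (hy : y ∈ Set.Icc u1 uh) =>
          le_trans hu1 hy.1)))
        (fun v1 v2 h1 h2 h3 => ⟨((hgint v2 (le_trans (le_trans hu1 h1) h2) x i).mono_set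
            (fun y hy => ⟨le_trans (le_trans hu1 h1) hy.1.le, hy.2⟩)).neg,
          by
            have hd := hdiff x i v1 v2 (le_trans hu1 h1) h2
            rw [MeasureTheory.integral_neg]
            linarith⟩)
        (le_trans (by rw [abs_sub_comm]; exact le_abs_self _)
          (le_trans (hcoorddist (ϑ u1) (θhat lam) x i) (le_max_right _ _)))
        (by
          filter_upwards [hdriftr, hmemae] with v hv hvmem hMf
          have hvIcc : v ∈ Set.Icc u1 u2 := ⟨hvmem.1.le, le_trans hvmem.2 huhmem.2⟩
          have hcv : dist (ϑ v) (θhat lam) ≤ C := hmax v hvIcc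
          have hg0 : 0 ≤ g v x i := by
            refine (hv x i).2 ?_
            have : γ * dist (ϑ v) (θhat lam) ≤ γ * C := mul_le_mul_of_nonneg_left hcv hγ0
            have hbb : γ * C ≤ b := le_max_left _ _
            linarith
          linarith)
      have hnoup' : θhat lam x i - ϑ uh x i ≤ b := hnoup
      linarith
  -- closedness of Λ and existence of a minimizer
  have hΛclosed : IsClosed Λ := by
    refine isClosed_of_closure_subset fun θ0 hθ0 => ?_
    refine happrox θ0 fun ε hε => ?_
    obtain ⟨θ'', hθ''Λ, hθ''d⟩ := Metric.mem_closure_iff.1 hθ0 ε hε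
    exact ⟨θ'', hθ''Λ, fun x i => le_of_lt
      (lt_of_le_of_lt (hcoorddist θ0 θ'' x i) hθ''d)⟩
  obtain ⟨r0, hr0S, hr0lt⟩ := exists_lt_of_csInf_lt (hne (ϑ s))
    (show sInf {r : ℝ | ∃ lam ∈ unitCube X m,
        r = ⨆ x : X, ⨆ i : Fin m, |ϑ s x i - θhat lam x i|} < D + 1 by
      rw [← hL (ϑ s), ← hDdef]; linarith)
  obtain ⟨lam1, hlam1, hr0eq⟩ := hr0S
  have hKne : (Λ ∩ Metric.closedBall (ϑ s) (D+1)).Nonempty := by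
    refine ⟨θhat lam1, hΛ ▸ ⟨lam1, hlam1, rfl⟩, ?_⟩
    rw [Metric.mem_closedBall, dist_comm, ← QTDAux.sup_eq_dist]
    rw [hr0eq] at hr0lt
    linarith
  have hKcomp : IsCompact (Λ ∩ Metric.closedBall (ϑ s) (D+1)) :=
    (isCompact_closedBall _ _).inter_left hΛclosed
  obtain ⟨θstar, hθstarK, hθstarmin⟩ := hKcomp.exists_isMinOn hKne
    ((continuous_const.dist continuous_id).continuousOn :
      ContinuousOn (fun θ' : X → Fin m → ℝ => dist (ϑ s) θ') _)
  have hθstarΛ := hθstarK.1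
  rw [hΛ] at hθstarΛ
  obtain ⟨lamstar, hlamstar, hθstar⟩ := hθstarΛ
  have hDeq' : dist (ϑ s) (θhat lamstar) = D := by
    refine le_antisymm ?_ ?_
    · rw [hDdef, hL]
      refine le_csInf (hne (ϑ s)) ?_
      rintro r ⟨lam2, hlam2, rfl⟩
      rw [QTDAux.sup_eq_dist]
      by_cases hcase : dist (ϑ s) (θhat lam2) ≤ D + 1
      · have hmem2 : θhat lam2 ∈ Λ ∩ Metric.closedBall (ϑ s) (D+1) :=
          ⟨hΛ ▸ ⟨lam2, hlam2, rfl⟩, by rw [Metric.mem_closedBall, dist_comm]; exact hcase⟩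
        have hmin := hθstarmin hmem2
        rw [← hθstar]
        exact hmin
      · push_neg at hcase
        have h1 : dist (ϑ s) θstar ≤ D + 1 := by
          have h2 := hθstarK.2
          rw [Metric.mem_closedBall] at h2
          rw [dist_comm]
          exact h2
        rw [← hθstar]
        linarith
    · rw [hDdef, hL]
      exact csInf_le (hbdd (ϑ s)) ⟨lamstar, hlamstar, (QTDAux.sup_eq_dist _ _).symm⟩
  have hLt_le : L (ϑ t) ≤ D := by
    calc L (ϑ t) ≤ ⨆ x : X, ⨆ i : Fin m, |ϑ t x i - θhat lamstar x i| := by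
          rw [hL]
          exact csInf_le (hbdd (ϑ t)) ⟨lamstar, hlamstar, rfl⟩
      _ = dist (ϑ t) (θhat lamstar) := QTDAux.sup_eq_dist _ _
      _ ≤ dist (ϑ s) (θhat lamstar) := hmono lamstar hlamstar s t hs hst.le
      _ = D := hDeq'
  rcases lt_or_eq_of_le hLt_le with hfin | heq
  · exact hfin
  · exfalso
    -- the distance is frozen at D on [s, t]
    have hceq : ∀ v, s ≤ v → v ≤ t → dist (ϑ v) (θhat lamstar) = D := by
      intro v hv1 hv2
      refine le_antisymm ?_ ?_
      · rw [← hDeq']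
        exact hmono lamstar hlamstar s v hs hv1
      · calc D = L (ϑ t) := heq.symm
          _ ≤ ⨆ x : X, ⨆ i : Fin m, |ϑ t x i - θhat lamstar x i| := by
              rw [hL]
              exact csInf_le (hbdd (ϑ t)) ⟨lamstar, hlamstar, rfl⟩
          _ = dist (ϑ t) (θhat lamstar) := QTDAux.sup_eq_dist _ _
          _ ≤ dist (ϑ v) (θhat lamstar) := hmono lamstar hlamstar v t (le_trans hs hv1) hv2
    have hcoordD : ∀ v, s ≤ v → v ≤ t → ∀ x i,
        |ϑ v x i - θhat lamstar x i| ≤ D := by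
      intro v hv1 hv2 x i
      rw [← hceq v hv1 hv2]
      exact hcoorddist (ϑ v) (θhat lamstar) x i
    -- frozen coordinates
    have hconstP : ∀ x i, ϑ t x i - θhat lamstar x i = D → ∀ v, s ≤ v → v ≤ t →
        ϑ v x i - θhat lamstar x i = D := by
      intro x i hti v hv1 hv2
      refine le_antisymm (le_trans (le_abs_self _) (hcoordD v hv1 hv2 x i)) ?_
      by_contra hlt'
      push_neg at hlt'
      set b := max (γ * D) (ϑ v x i - θhat lamstar x i) with hbdef
      have hbD : b < D := max_lt (by nlinarith) hlt'
      have hsubIci : Set.Ioc v t ⊆ Set.Ici (0:ℝ) :=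
        fun y hy => le_trans (le_trans hs hv1) hy.1.le
      have hdriftr := MeasureTheory.ae_restrict_of_ae_restrict_of_subset hsubIci
        (hdrift lamstar hlamstar)
      have hmemae := MeasureTheory.ae_restrict_mem (μ := MeasureTheory.volume)
        (s := Set.Ioc v t) measurableSet_Ioc
      have hnoup := QTDAux.noup (f := fun v' => ϑ v' x i - θhat lamstar x i)
        (φ := fun v' => g v' x i) (u1 := v) (u2 := t) (M := b) hv2
        (((hcont x i).mono (fun y (hy : y ∈ Set.Icc v t) =>
          le_trans (le_trans hs hv1) hy.1)).sub continuousOn_const)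
        (fun v1 v2 h1 h2 h3 => ⟨(hgint v2 (le_trans (le_trans (le_trans hs hv1) h1) h2) x i).mono_set
            (fun y hy => ⟨le_trans (le_trans (le_trans hs hv1) h1) hy.1.le, hy.2⟩),
          by
            have hd := hdiff x i v1 v2 (le_trans (le_trans hs hv1) h1) h2
            linarith⟩)
        (le_max_right _ _)
        (by
          filter_upwards [hdriftr, hmemae] with v' hv' hvmem' hMf
          refine (hv' x i).1 ?_
          have hveq := hceq v' (le_trans hv1 hvmem'.1.le) hvmem'.2
          rw [hveq]
          have hbb : γ * D ≤ b := le_max_left _ _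
          linarith)
      have hnoup' : ϑ t x i - θhat lamstar x i ≤ b := hnoup
      linarith
    have hconstM : ∀ x i, ϑ t x i - θhat lamstar x i = -D → ∀ v, s ≤ v → v ≤ t →
        ϑ v x i - θhat lamstar x i = -D := by
      intro x i hti v hv1 hv2
      refine le_antisymm ?_ ?_
      swap
      · have h1 := hcoordD v hv1 hv2 x i
        have h2 := abs_le.1 h1
        linarith [h2.1]
      by_contra hlt'
      push_neg at hlt'
      set b := max (γ * D) (θhat lamstar x i - ϑ v x i) with hbdef
      have hbD : b < D := by
        refine max_lt (by nlinarith) ?_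
        linarith
      have hsubIci : Set.Ioc v t ⊆ Set.Ici (0:ℝ) :=
        fun y hy => le_trans (le_trans hs hv1) hy.1.le
      have hdriftr := MeasureTheory.ae_restrict_of_ae_restrict_of_subset hsubIci
        (hdrift lamstar hlamstar)
      have hmemae := MeasureTheory.ae_restrict_mem (μ := MeasureTheory.volume)
        (s := Set.Ioc v t) measurableSet_Ioc
      have hnoup := QTDAux.noup (f := fun v' => θhat lamstar x i - ϑ v' x i)
        (φ := fun v' => -(g v' x i)) (u1 := v) (u2 := t) (M := b) hv2
        (continuousOn_const.sub ((hcont x i).mono (fun y (hy : y ∈ Set.Icc v t) =>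
          le_trans (le_trans hs hv1) hy.1)))
        (fun v1 v2 h1 h2 h3 => ⟨((hgint v2 (le_trans (le_trans (le_trans hs hv1) h1) h2) x i).mono_set
            (fun y hy => ⟨le_trans (le_trans (le_trans hs hv1) h1) hy.1.le, hy.2⟩)).neg,
          by
            have hd := hdiff x i v1 v2 (le_trans (le_trans hs hv1) h1) h2
            rw [MeasureTheory.integral_neg]
            linarith⟩)
        (le_max_right _ _)
        (by
          filter_upwards [hdriftr, hmemae] with v' hv' hvmem' hMf
          have hveq := hceq v' (le_trans hv1 hvmem'.1.le) hvmem'.2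
          have hg0 : 0 ≤ g v' x i := by
            refine (hv' x i).2 ?_
            rw [hveq]
            have hbb : γ * D ≤ b := le_max_left _ _
            linarith
          linarith)
      have hnoup' : θhat lamstar x i - ϑ t x i ≤ b := hnoup
      linarith
    -- a.e. vanishing of the derivative at frozen coordinates
    have hintst : ∀ x i, MeasureTheory.IntegrableOn (fun u => g u x i) (Set.Ioc s t) :=
      fun x i => (hgint t (le_trans hs hst.le) x i).mono_set
        (fun y hy => ⟨le_trans hs hy.1.le, hy.2⟩)
    have hgzeroP : ∀ x i, ϑ t x i - θhat lamstar x i = D →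
        ∀ᵐ v ∂(MeasureTheory.volume.restrict (Set.Ioc s t)), g v x i = 0 := by
      intro x i hti
      have hsum : ∫ u in Set.Ioc s t, g u x i = 0 := by
        have h1 := hdiff x i s t hs hst.le
        have h2 := hconstP x i hti t hst.le le_rfl
        have h3 := hconstP x i hti s le_rfl hst.le
        linarith
      have hgle : ∀ᵐ v ∂(MeasureTheory.volume.restrict (Set.Ioc s t)), 0 ≤ -(g v x i) := by
        have hsubIci : Set.Ioc s t ⊆ Set.Ici (0:ℝ) := fun y hy => le_trans hs hy.1.le
        filter_upwards [MeasureTheory.ae_restrict_of_ae_restrict_of_subset hsubIci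
          (hdrift lamstar hlamstar),
          MeasureTheory.ae_restrict_mem (μ := MeasureTheory.volume)
            (s := Set.Ioc s t) measurableSet_Ioc] with v hv hvm
        have hg : g v x i ≤ 0 := by
          refine (hv x i).1 ?_
          rw [hceq v hvm.1.le hvm.2, hconstP x i hti v hvm.1.le hvm.2]
          nlinarith
        linarith
      have h0 : (fun v => -(g v x i)) =ᵐ[MeasureTheory.volume.restrict (Set.Ioc s t)] 0 := by
        rw [← MeasureTheory.integral_eq_zero_iff_of_nonneg_ae hgle (hintst x i).neg]
        rw [MeasureTheory.integral_neg, hsum]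
        ring
      filter_upwards [h0] with v hv
      have : -(g v x i) = 0 := hv
      linarith
    have hgzeroM : ∀ x i, ϑ t x i - θhat lamstar x i = -D →
        ∀ᵐ v ∂(MeasureTheory.volume.restrict (Set.Ioc s t)), g v x i = 0 := by
      intro x i hti
      have hsum : ∫ u in Set.Ioc s t, g u x i = 0 := by
        have h1 := hdiff x i s t hs hst.le
        have h2 := hconstM x i hti t hst.le le_rfl
        have h3 := hconstM x i hti s le_rfl hst.le
        linarith
      have hgle : ∀ᵐ v ∂(MeasureTheory.volume.restrict (Set.Ioc s t)), 0 ≤ g v x i := by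
        have hsubIci : Set.Ioc s t ⊆ Set.Ici (0:ℝ) := fun y hy => le_trans hs hy.1.le
        filter_upwards [MeasureTheory.ae_restrict_of_ae_restrict_of_subset hsubIci
          (hdrift lamstar hlamstar),
          MeasureTheory.ae_restrict_mem (μ := MeasureTheory.volume)
            (s := Set.Ioc s t) measurableSet_Ioc] with v hv hvm
        refine (hv x i).2 ?_
        rw [hceq v hvm.1.le hvm.2, hconstM x i hti v hvm.1.le hvm.2]
        nlinarith
      have h0 : (fun v => g v x i) =ᵐ[MeasureTheory.volume.restrict (Set.Ioc s t)] 0 := by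
        rw [← MeasureTheory.integral_eq_zero_iff_of_nonneg_ae hgle (hintst x i)]
        exact hsum
      filter_upwards [h0] with v hv
      exact hv
    -- pick a good time v0
    have hgz : ∀ x i, ∀ᵐ v ∂(MeasureTheory.volume.restrict (Set.Ioc s t)),
        (ϑ t x i - θhat lamstar x i = D → g v x i = 0) ∧
        (ϑ t x i - θhat lamstar x i = -D → g v x i = 0) := by
      intro x i
      by_cases hp : ϑ t x i - θhat lamstar x i = D
      · filter_upwards [hgzeroP x i hp] with v hv
        exact ⟨fun _ => hv, fun _ => hv⟩
      · by_cases hq : ϑ t x i - θhat lamstar x i = -D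
        · filter_upwards [hgzeroM x i hq] with v hv
          exact ⟨fun _ => hv, fun _ => hv⟩
        · exact Filter.Eventually.of_forall fun v =>
            ⟨fun h => absurd h hp, fun h => absurd h hq⟩
    haveI hNeBot : (MeasureTheory.ae (MeasureTheory.volume.restrict (Set.Ioc s t))).NeBot := by
      refine MeasureTheory.ae_neBot.2 ?_
      intro hzero0
      rw [MeasureTheory.Measure.restrict_eq_zero, Real.volume_Ioc] at hzero0
      rw [ENNReal.ofReal_eq_zero] at hzero0
      linarith
    have hsubIci : Set.Ioc s t ⊆ Set.Ici (0:ℝ) := fun y hy => le_trans hs hy.1.le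
    obtain ⟨v0, hv0⟩ := ((MeasureTheory.ae_restrict_mem (μ := MeasureTheory.volume)
        (s := Set.Ioc s t) measurableSet_Ioc).and
      ((MeasureTheory.ae_restrict_of_ae_restrict_of_subset hsubIci hDI).and
        (MeasureTheory.ae_all_iff.2 fun x => MeasureTheory.ae_all_iff.2 fun i => hgz x i))).exists
    have hv0mem := hv0.1
    have hv0DI := hv0.2.1
    have hv0gz := hv0.2.2
    -- slack facts at the frozen coordinates
    have hsD : ∀ x i, |ϑ v0 x i - θhat lamstar x i| ≤ D :=
      hcoordD v0 hv0mem.1.le hv0mem.2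
    have hsp : ∀ x i, ϑ t x i - θhat lamstar x i = D →
        ∀ y, y < θhat lamstar x i + (1-γ)*D →
        cdf (bellman P γ (paramDist (θhat lamstar)) x) y ≤ qlevel m i := by
      intro x i hfz y hy
      haveI := QTDAux.bellman_isProb P hP γ hm (ϑ v0) x
      haveI := QTDAux.bellman_isProb P hP γ hm (θhat lamstar) x
      have hg0 := (hv0gz x i).1 hfz
      obtain ⟨_, hhi⟩ := Set.mem_Icc.mp (hv0DI x i)
      have hll : Function.leftLim
          (fun z => cdf (bellman P γ (paramDist (ϑ v0)) x) z) (ϑ v0 x i) ≤ qlevel m i := by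
        rw [hg0] at hhi
        linarith
      have hfv0 : ϑ v0 x i - θhat lamstar x i = D := hconstP x i hfz v0 hv0mem.1.le hv0mem.2
      have hsw : cdf (bellman P γ (paramDist (θhat lamstar)) x) y
          ≤ cdf (bellman P γ (paramDist (ϑ v0)) x) (y + γ * D) :=
        QTDAux.bellman_cdf_sandw P hP hγ0 hm (ϑ v0) (θhat lamstar)
          (fun x' i' => by rw [abs_sub_comm]; exact hsD x' i') x y
      have hmonle : cdf (bellman P γ (paramDist (ϑ v0)) x) (y + γ * D)
          ≤ Function.leftLim
            (fun z => cdf (bellman P γ (paramDist (ϑ v0)) x) z) (ϑ v0 x i) :=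
        Monotone.le_leftLim ((cdf _).mono) (by nlinarith)
      linarith
    have hsm : ∀ x i, ϑ t x i - θhat lamstar x i = -D →
        qlevel m i ≤ cdf (bellman P γ (paramDist (θhat lamstar)) x)
          (θhat lamstar x i - (1-γ)*D) := by
      intro x i hfz
      haveI := QTDAux.bellman_isProb P hP γ hm (ϑ v0) x
      haveI := QTDAux.bellman_isProb P hP γ hm (θhat lamstar) x
      have hg0 := (hv0gz x i).2 hfz
      obtain ⟨hlo, _⟩ := Set.mem_Icc.mp (hv0DI x i)
      have hF : qlevel m i ≤ cdf (bellman P γ (paramDist (ϑ v0)) x) (ϑ v0 x i) := by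
        rw [hg0] at hlo
        linarith
      have hfv0 : ϑ v0 x i - θhat lamstar x i = -D := hconstM x i hfz v0 hv0mem.1.le hv0mem.2
      have hsw : cdf (bellman P γ (paramDist (ϑ v0)) x) (ϑ v0 x i)
          ≤ cdf (bellman P γ (paramDist (θhat lamstar)) x) (ϑ v0 x i + γ * D) :=
        QTDAux.bellman_cdf_sandw P hP hγ0 hm (θhat lamstar) (ϑ v0)
          (fun x' i' => hsD x' i') x _
      have harg : ϑ v0 x i + γ * D = θhat lamstar x i - (1-γ)*D := by
        rw [eq_comm, ← sub_eq_zero]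
        nlinarith
      rw [harg] at hsw
      exact le_trans hF hsw
    -- escape: strictly better fixed point
    have hbandstar : QTDAux.Band P γ (θhat lamstar) :=
      (hΛband (θhat lamstar)).1 (hΛ ▸ ⟨lamstar, hlamstar, rfl⟩)
    have hdistt : ∀ x i, |ϑ t x i - θhat lamstar x i| ≤ D :=
      hcoordD t hst.le le_rfl
    obtain ⟨θ', ε', hε'pos, hband', hd'⟩ := QTDAux.escape P hP hγ0 hγ1 hm
      (θhat lamstar) (ϑ t) hD hbandstar hdistt hsp hsm
    obtain ⟨lam', hlam', hfix'⟩ := QTDAux.band_to_fix P hP γ hm θ' hband'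
    have hθ'val : θ' = θhat lam' := hθhatUnique lam' (fun x i => hlam' x i) θ' hfix'
    have hLt2 : L (ϑ t) ≤ D - ε' := by
      rw [hL]
      refine le_trans (csInf_le (hbdd (ϑ t)) ⟨lam', (fun x i => hlam' x i), rfl⟩) ?_
      refine ciSup_le fun x => ciSup_le fun i => ?_
      rw [← hθ'val]
      exact hd' x i
    rw [heq] at hLt2
    linarith
end
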